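/- arXiv:2411.15473 — 6 statements merged into one kernel-verified Lean document; each statement's English description precedes it below -/
import Mathlib

section
/- Let (T,F) be an s-torsion pair in the m-extended heart D^{[-(m-1),0]}. Then Hom(T,F[j])=0 for all T∈T, F∈F and all integers j<0. -/
open CategoryTheory Limits Pretriangulated Triangulated

variable {D : Type*} [Category D] [Preadditive D] [HasZeroObject D] [HasShift D ℤ]
  [∀ n : ℤ, (shiftFunctor D n).Additive] [Pretriangulated D]

/-- `star S T` is the full subcategory `S * T`, consisting of the objects `Z`
admitting a distinguished triangle `X → Z → Y → X⟦1⟧` with `X ∈ S` and `Y ∈ T`. -/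
def star (S T : Set D) : Set D :=
  {Z | ∃ (X Y : D) (f : X ⟶ Z) (g : Z ⟶ Y) (h : Y ⟶ X⟦(1 : ℤ)⟧),
    (Triangle.mk f g h ∈ distTriang D) ∧ X ∈ S ∧ Y ∈ T}

/-- A t-structure is bounded if every object lies in some `D^{[a,b]}`. -/
def CategoryTheory.Triangulated.TStructure.IsBounded (t : TStructure D) : Prop :=
  ∀ X : D, ∃ a b : ℤ, t.ge a X ∧ t.le b X

/-- The `m`-extended heart `D^{[-(m-1),0]} = D^{≤ 0} ∩ D^{≥ -(m-1)}`
of a t-structure. -/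
def extHeart (t : TStructure D) (m : ℕ) : Set D :=
  {X | t.le 0 X ∧ t.ge (1 - (m : ℤ)) X}

/-- The shifted full subcategory `S[n]` (closed under isomorphisms). -/
def shiftSet (S : Set D) (n : ℤ) : Set D :=
  {X | ∃ Y ∈ S, Nonempty (X ≅ Y⟦n⟧)}

/-- A torsion pair `(T,F)` in the `m`-extended heart: `T`, `F` are full
subcategories of `D^{[-(m-1),0]}` with `Hom(T,F) = 0` and
`D^{[-(m-1),0]} = T * F`. -/
structure IsTorsionPair (t : TStructure D) (m : ℕ) (T F : Set D) : Prop where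
  subsetT : T ⊆ extHeart t m
  subsetF : F ⊆ extHeart t m
  hom_zero : ∀ X ∈ T, ∀ Y ∈ F, ∀ f : X ⟶ Y, f = 0
  heart_eq : extHeart t m = star T F

/-- An s-torsion pair is a torsion pair with `Hom(T,F[-1]) = 0`. -/
structure IsSTorsionPair (t : TStructure D) (m : ℕ) (T F : Set D)
    extends IsTorsionPair t m T F : Prop where
  hom_neg_one_zero : ∀ X ∈ T, ∀ Y ∈ F, ∀ f : X ⟶ Y⟦(-1 : ℤ)⟧, f = 0

/-- `Fac t m S n` is the class of `n`-factors of `S` in the `m`-extended heart: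
objects `Z₀` admitting triangles `Zᵢ → Xᵢ → Zᵢ₋₁ → Zᵢ⟦1⟧` (`1 ≤ i ≤ n`) with
all `Zᵢ` in the `m`-extended heart and all `Xᵢ ∈ S`. -/
def Fac (t : TStructure D) (m : ℕ) (S : Set D) : ℕ → Set D
  | 0 => extHeart t m
  | n + 1 =>
    {Z | Z ∈ extHeart t m ∧ ∃ (Z₁ X₁ : D) (f : Z₁ ⟶ X₁) (g : X₁ ⟶ Z) (h : Z ⟶ Z₁⟦(1 : ℤ)⟧),
      (Triangle.mk f g h ∈ distTriang D) ∧ X₁ ∈ S ∧ Z₁ ∈ Fac t m S n}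

/-- `SubObj t m S n` is the class of `n`-subobjects of `S` in the `m`-extended heart:
objects `Z₀` admitting triangles `Zᵢ₋₁ → Xᵢ → Zᵢ → Zᵢ₋₁⟦1⟧` (`1 ≤ i ≤ n`) with
all `Zᵢ` in the `m`-extended heart and all `Xᵢ ∈ S`. -/
def SubObj (t : TStructure D) (m : ℕ) (S : Set D) : ℕ → Set D
  | 0 => extHeart t m
  | n + 1 =>
    {Z | Z ∈ extHeart t m ∧ ∃ (X₁ Z₁ : D) (f : Z ⟶ X₁) (g : X₁ ⟶ Z₁) (h : Z₁ ⟶ Z⟦(1 : ℤ)⟧),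
      (Triangle.mk f g h ∈ distTriang D) ∧ X₁ ∈ S ∧ Z₁ ∈ SubObj t m S n}

/-!
Statement 2. For an s-torsion pair `(T,F)` in the `m`-extended heart,
`Hom(T, F[j]) = 0` for all `j < 0`.
-/
/-- Vanishing of `Hom` between `D^{≤ a}` and `D^{≥ b}` for `a < b`. -/
lemma zero_of_LE_GE (t : TStructure D) {A B : D} (a b : ℤ) (hab : a < b)
    (hA : t.le a A) (hB : t.ge b B) (f : A ⟶ B) : f = 0 := by
  apply (shiftFunctor D a).map_injective
  rw [Functor.map_zero]
  exact t.zero' _ (t.le_shift a a 0 (by omega) A hA)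
    (t.ge_antitone (show (1 : ℤ) ≤ b - a by omega) _
      (t.ge_shift b a (b - a) (by omega) B hB))

omit [HasZeroObject D] [Pretriangulated D] in
/-- If all maps `A ⟶ B⟦-k⟧` vanish then all maps `A⟦k⟧ ⟶ B` vanish. -/
lemma hom_shift_zero {A B : D} (k : ℤ) (h : ∀ g : A ⟶ B⟦-k⟧, g = 0)
    (φ : A⟦k⟧ ⟶ B) : φ = 0 := by
  apply (shiftFunctor D (-k)).map_injective
  rw [Functor.map_zero]
  have h0 := h (((shiftEquiv D k).unitIso.app A).hom ≫ (shiftFunctor D (-k)).map φ)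
  refine Eq.trans (b := ((shiftEquiv D k).unitIso.app A).inv ≫
        (((shiftEquiv D k).unitIso.app A).hom ≫ (shiftFunctor D (-k)).map φ)) (Iso.inv_hom_id_assoc _ _).symm ?_
  rw [h0]
  exact comp_zero

/-- The subcategory `D^{≥ n}` is closed under extensions. -/
lemma ge_ext (t : TStructure D) (n : ℤ) (Tr : Triangle D) (hTr : Tr ∈ distTriang D)
    (h₁ : t.ge n Tr.obj₁) (h₃ : t.ge n Tr.obj₃) : t.ge n Tr.obj₂ := by
  obtain ⟨X, Y, hX, hY, f, g, h, mem⟩ := t.exists_triangle Tr.obj₂ (n - 1) n (by omega)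
  have hf0 : f = 0 := by
    have h2 : f ≫ Tr.mor₂ = 0 := zero_of_LE_GE t (n - 1) n (by omega) hX h₃ _
    obtain ⟨e, he⟩ := Triangle.coyoneda_exact₂ Tr hTr f h2
    rw [he, zero_of_LE_GE t (n - 1) n (by omega) hX h₁ e, zero_comp]
  have hX0 : IsZero X := by
    obtain ⟨w, hw⟩ := Triangle.coyoneda_exact₂ _
      (inv_rot_of_distTriang _ mem) (𝟙 X) (by change 𝟙 X ≫ f = 0; rw [hf0, comp_zero])
    rw [IsZero.iff_id_eq_zero, hw,
      zero_of_LE_GE t (n - 1) (n + 1) (by omega) hX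
        (t.ge_shift n (-1) (n + 1) (by omega) Y hY) w]
    exact zero_comp
  have : IsIso g := (Triangle.isZero₁_iff_isIso₂ _ mem).1 hX0
  exact ((t.ge n).prop_iff_of_iso (asIso g)).2 hY

theorem stmt2 (t : TStructure D) (ht : t.IsBounded) (m : ℕ) (hm : 0 < m)
    (T F : Set D) (hTF : IsSTorsionPair t m T F) :
    ∀ X ∈ T, ∀ Y ∈ F, ∀ j : ℤ, j < 0 → ∀ f : X ⟶ Y⟦j⟧, f = 0 := by
  have key : ∀ (n : ℕ) (j : ℤ), j = -(n + 1) →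
      ∀ X ∈ T, ∀ Y ∈ F, ∀ f : X ⟶ Y⟦j⟧, f = 0 := by
    intro n
    induction n with
    | zero =>
      intro j hj X hX Y hY f
      have hj' : j = -1 := by push_cast at hj; omega
      subst hj'
      exact hTF.hom_neg_one_zero X hX Y hY f
    | succ n IH =>
      intro j hj X hXT Y hYF f
      have hj2 : j = -(n : ℤ) - 2 := by push_cast at hj; omega
      have hX : t.le 0 X := (hTF.subsetT hXT).1
      have hYge : t.ge (1 - (m : ℤ)) Y := (hTF.subsetF hYF).2
      by_cases hcase : j < 1 - (m : ℤ)
      · exact zero_of_LE_GE t 0 (1 - m - j) (by omega) hX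
          (t.ge_shift (1 - m) j (1 - m - j) (by omega) Y hYge) f
      · -- truncate `Y⟦j⟧` at `1`
        obtain ⟨Z', Q', hZ'le, hQ'ge, w, q, con, htri⟩ :=
          t.exists_triangle (Y⟦j⟧) 1 2 rfl
        have hfq : f ≫ q = 0 := zero_of_LE_GE t 0 2 (by omega) hX hQ'ge _
        obtain ⟨e, he⟩ := Triangle.coyoneda_exact₂ (Triangle.mk w q con) htri f hfq
        -- `Z'⟦1⟧` lies in the extended heart
        have hZ'ge : t.ge (2 - (m : ℤ)) Z' := by
          refine ge_ext t _ _ (inv_rot_of_distTriang _ htri) ?_ ?_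
          · exact t.ge_antitone (show (2 : ℤ) - m ≤ 3 by omega) _
              (t.ge_shift 2 (-1) 3 (by omega) Q' hQ'ge)
          · exact t.ge_antitone (show (2 : ℤ) - m ≤ 1 - m - j by omega) _
              (t.ge_shift (1 - m) j (1 - m - j) (by omega) Y hYge)
        have hZheart : Z'⟦(1 : ℤ)⟧ ∈ extHeart t m :=
          ⟨t.le_shift 1 1 0 (by omega) Z' hZ'le,
           t.ge_shift (2 - m) 1 (1 - m) (by omega) Z' hZ'ge⟩
        rw [hTF.heart_eq] at hZheart
        obtain ⟨T₀, F₀, a, b, cc, htri2, hT₀, hF₀⟩ := hZheart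
        -- factor `e⟦1⟧` through `T₀`
        have hb0 : (shiftFunctor D (1 : ℤ)).map e ≫ b = 0 :=
          hom_shift_zero 1 (fun g => hTF.hom_neg_one_zero X hXT F₀ hF₀ g) _
        obtain ⟨v, hv⟩ := Triangle.coyoneda_exact₂ _ htri2
          ((shiftFunctor D (1 : ℤ)).map e) hb0
        -- the composite `T₀ → Z'⟦1⟧ → Y⟦j⟧⟦1⟧ ≅ Y⟦j+1⟧` vanishes by induction
        set e₂ := (shiftFunctorAdd' D j 1 (j + 1) rfl).app Y with he₂
        have hd : a ≫ (shiftFunctor D (1 : ℤ)).map w ≫ e₂.inv = 0 :=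
          IH (j + 1) (by push_cast; omega) T₀ hT₀ Y hYF _
        have haw : a ≫ (shiftFunctor D (1 : ℤ)).map w = 0 := by
          calc a ≫ (shiftFunctor D (1 : ℤ)).map w
              = (a ≫ (shiftFunctor D (1 : ℤ)).map w ≫ e₂.inv) ≫ e₂.hom := by simp
            _ = 0 := by rw [hd, zero_comp]
        apply (shiftFunctor D (1 : ℤ)).map_injective
        rw [Functor.map_zero, he]
        erw [Functor.map_comp]
        erw [hv]
        exact (Category.assoc v a ((shiftFunctor D (1 : ℤ)).map w)).trans ((congrArg (fun x => v ≫ x) haw).trans comp_zero)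
  intro X hX Y hY j hj f
  obtain ⟨n, hn⟩ : ∃ n : ℕ, j = -((n : ℤ) + 1) := ⟨(-j - 1).toNat, by omega⟩
  exact key n j hn X hX Y hY f
end

section
/- Let (T,F) be an s-torsion pair in D^{[-(m-1),0]} and let (C^{≤0},C^{≥0}) = (D^{≤-m}*T, F[1]*D^{≥0}) be the corresponding bounded t-structure. Then F[m]*T equals the m-extended heart C^{[-(m-1),0]} = C^{≤0}∩C^{≥-(m-1)} of (C^{≤0},C^{≥0}); in particular, (F[m],T) is an s-torsion pair in C^{[-(m-1),0]}. -/
open CategoryTheory Limits Pretriangulated Triangulated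

variable {D : Type*} [Category D] [Preadditive D] [HasZeroObject D] [HasShift D ℤ]
  [∀ n : ℤ, (shiftFunctor D n).Additive] [Pretriangulated D]

section Helpers

open ZeroObject

noncomputable def shiftAddIso (X : D) (a b c : ℤ) (h : a + b = c) : (X⟦a⟧)⟦b⟧ ≅ X⟦c⟧ :=
  (shiftFunctorAdd' D a b c h).symm.app X

noncomputable def shiftCancelIso (X : D) (a b : ℤ) (h : a + b = 0) : (X⟦a⟧)⟦b⟧ ≅ X :=
  shiftAddIso X a b 0 h ≪≫ (shiftFunctorZero D ℤ).app X

lemma isZero_shift_obj {X : D} (hX : IsZero X) (n : ℤ) : IsZero (X⟦n⟧) := by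
  rw [IsZero.iff_id_eq_zero] at hX ⊢
  rw [← (shiftFunctor D n).map_id, hX, Functor.map_zero]

namespace CategoryTheory.Triangulated.TStructure

lemma zero_of_le_of_ge (t : TStructure D) {X Y : D} (f : X ⟶ Y) (a b : ℤ) (hab : a < b)
    (hX : t.le a X) (hY : t.ge b Y) : f = 0 := by
  have hX' : t.le 0 (X⟦a⟧) := t.le_shift a a 0 (by omega) X hX
  have hY' : t.ge 1 (Y⟦a⟧) :=
    t.ge_antitone (show (1:ℤ) ≤ b - a by omega) _ (t.ge_shift b a (b - a) (by omega) Y hY)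
  have := t.zero' ((shiftFunctor D a).map f) hX' hY'
  exact (shiftFunctor D a).map_eq_zero_iff.1 this

lemma le_of_isZero (t : TStructure D) {X : D} (hX : IsZero X) (n : ℤ) : t.le n X := by
  obtain ⟨X₁, Y₁, hX₁, hY₁, f, g, h, mem⟩ := t.exists_triangle_zero_one (0 : D)
  have hIso : IsIso h := (Triangle.isZero₂_iff_isIso₃ _ mem).1 (isZero_zero D)
  have hsh : t.ge 1 (X₁⟦(1:ℤ)⟧) := ObjectProperty.prop_of_iso (t.ge 1) (asIso h) hY₁
  have hge2 : t.ge 2 X₁ := ObjectProperty.prop_of_iso (t.ge 2) (shiftCancelIso X₁ 1 (-1) (by omega))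
    (t.ge_shift 1 (-1) 2 (by omega) _ hsh)
  have hzX₁ : IsZero X₁ := by
    rw [IsZero.iff_id_eq_zero]
    exact t.zero_of_le_of_ge (𝟙 X₁) 0 2 (by omega) hX₁ hge2
  exact ObjectProperty.prop_of_iso (t.le n) ((isZero_shift_obj hzX₁ (-n)).iso hX)
    (t.le_shift 0 (-n) n (by omega) X₁ hX₁)

lemma ge_of_isZero (t : TStructure D) {X : D} (hX : IsZero X) (n : ℤ) : t.ge n X := by
  obtain ⟨X₁, Y₁, hX₁, hY₁, f, g, h, mem⟩ := t.exists_triangle_zero_one (0 : D)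
  have hIso : IsIso h := (Triangle.isZero₂_iff_isIso₃ _ mem).1 (isZero_zero D)
  have hsh : t.ge 1 (X₁⟦(1:ℤ)⟧) := ObjectProperty.prop_of_iso (t.ge 1) (asIso h) hY₁
  have hge2 : t.ge 2 X₁ := ObjectProperty.prop_of_iso (t.ge 2) (shiftCancelIso X₁ 1 (-1) (by omega))
    (t.ge_shift 1 (-1) 2 (by omega) _ hsh)
  have hzX₁ : IsZero X₁ := by
    rw [IsZero.iff_id_eq_zero]
    exact t.zero_of_le_of_ge (𝟙 X₁) 0 2 (by omega) hX₁ hge2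
  have hzY₁ : IsZero Y₁ := (isZero_shift_obj hzX₁ 1).of_iso (asIso h)
  exact ObjectProperty.prop_of_iso (t.ge n) ((isZero_shift_obj hzY₁ (1 - n)).iso hX)
    (t.ge_shift 1 (1 - n) n (by omega) Y₁ hY₁)

end CategoryTheory.Triangulated.TStructure

lemma mem_star_of_dist {S T : Set D} (Tr : Triangle D) (hTr : Tr ∈ distTriang D)
    (h1 : Tr.obj₁ ∈ S) (h3 : Tr.obj₃ ∈ T) : Tr.obj₂ ∈ star S T :=
  ⟨Tr.obj₁, Tr.obj₃, Tr.mor₁, Tr.mor₂, Tr.mor₃, hTr, h1, h3⟩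

lemma dist_id_zero {W E : D} (hE : IsZero E) :
    Triangle.mk (𝟙 W) (0 : W ⟶ E) (0 : E ⟶ W⟦(1:ℤ)⟧) ∈ distTriang D := by
  refine isomorphic_distinguished _ (contractible_distinguished W) _ ?_
  exact Triangle.isoMk _ _ (Iso.refl _) (Iso.refl _) (hE.iso (isZero_zero D))
    (by rfl) (by apply (isZero_zero D).eq_of_tgt) (by apply hE.eq_of_src)

lemma dist_zero_id {W E : D} (hE : IsZero E) :
    Triangle.mk (0 : E ⟶ W) (𝟙 W) (0 : W ⟶ E⟦(1:ℤ)⟧) ∈ distTriang D := by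
  refine isomorphic_distinguished _ (contractible_distinguished₁ W) _ ?_
  exact Triangle.isoMk _ _ (hE.iso (isZero_zero D)) (Iso.refl _) (Iso.refl _)
    (by apply hE.eq_of_src) (by rfl)
    (by apply (isZero_shift_obj (isZero_zero D) 1).eq_of_tgt)

end Helpers

open ZeroObject

/-!
Statement 3. Let `(T,F)` be an s-torsion pair in `D^{[-(m-1),0]}` and let
`(C^{≤0}, C^{≥0}) = (D^{≤ -m} * T, F[1] * D^{≥ 0})` be the corresponding
bounded t-structure. Then `F[m] * T` equals the `m`-extended heart
`C^{[-(m-1),0]} = C^{≤ 0} ∩ C^{≥ -(m-1)}`; in particular `(F[m], T)` is an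
s-torsion pair in `C^{[-(m-1),0]}`.
-/
theorem stmt3 (t : TStructure D) (ht : t.IsBounded) (m : ℕ) (hm : 0 < m)
    (T F : Set D) (hTF : IsSTorsionPair t m T F)
    -- the corresponding t-structure:  C^{≤0} and C^{≥0} ( = C^{≥ 0}),
    -- with C^{≥ -(m-1)} = C^{≥ 0}[m-1]
    (CLE CGE CHeart : Set D)
    (hCLE : CLE = star {X | t.le (-(m : ℤ)) X} T)
    (hCGE : CGE = star (shiftSet F 1) {X | t.ge 0 X})
    (hCHeart : CHeart = CLE ∩ shiftSet CGE ((m : ℤ) - 1)) :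
    star (shiftSet F (m : ℤ)) T = CHeart ∧
    -- `(F[m], T)` is an s-torsion pair in `C^{[-(m-1),0]}`:
    shiftSet F (m : ℤ) ⊆ CHeart ∧ T ⊆ CHeart ∧
    (∀ X ∈ shiftSet F (m : ℤ), ∀ Y ∈ T, ∀ f : X ⟶ Y, f = 0) ∧
    (∀ X ∈ shiftSet F (m : ℤ), ∀ Y ∈ T, ∀ f : X ⟶ Y⟦(-1 : ℤ)⟧, f = 0) ∧
    CHeart = star (shiftSet F (m : ℤ)) T := by
  subst hCLE hCGE hCHeart
  -- zero objects in `T` and `F`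
  have h0 : (0:D) ∈ extHeart t m :=
    ⟨t.le_of_isZero (Limits.isZero_zero D) 0, t.ge_of_isZero (Limits.isZero_zero D) _⟩
  rw [hTF.heart_eq] at h0
  obtain ⟨T₀, F₀, f₀, g₀, h₀, hd₀, hT₀, hF₀⟩ := h0
  have hIso₀ : IsIso h₀ := (Triangle.isZero₂_iff_isIso₃ _ hd₀).1 (Limits.isZero_zero D)
  have e₀ : T₀ ≅ F₀⟦(-1:ℤ)⟧ :=
    (shiftCancelIso T₀ 1 (-1) (by omega)).symm ≪≫ (shiftFunctor D (-1:ℤ)).mapIso (asIso h₀).symm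
  have hzT₀ : IsZero T₀ := by
    rw [IsZero.iff_id_eq_zero, ← e₀.hom_inv_id,
      hTF.hom_neg_one_zero T₀ hT₀ F₀ hF₀ e₀.hom, zero_comp]
  have hzF₀ : IsZero F₀ := (isZero_shift_obj hzT₀ 1).of_iso (asIso h₀)
  -- `F⟦m⟧ ⊆ D^{≤ -m}`
  have hLE_Fm : ∀ {X : D}, X ∈ shiftSet F (m:ℤ) → t.le (-(m:ℤ)) X := by
    rintro X ⟨Y, hY, ⟨e⟩⟩
    exact ObjectProperty.prop_of_iso (t.le (-(m:ℤ))) e.symm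
      (t.le_shift 0 m (-(m:ℤ)) (by omega) Y (hTF.subsetF hY).1)
  -- Hom vanishing
  have hv1 : ∀ X ∈ shiftSet F (m:ℤ), ∀ Y ∈ T, ∀ f : X ⟶ Y, f = 0 := by
    intro X hX Y hY f
    exact t.zero_of_le_of_ge f (-(m:ℤ)) (1-(m:ℤ)) (by omega) (hLE_Fm hX) (hTF.subsetT hY).2
  have hv2 : ∀ X ∈ shiftSet F (m:ℤ), ∀ Y ∈ T, ∀ f : X ⟶ Y⟦(-1:ℤ)⟧, f = 0 := by
    intro X hX Y hY f
    exact t.zero_of_le_of_ge f (-(m:ℤ)) (2-(m:ℤ)) (by omega) (hLE_Fm hX)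
      (t.ge_shift (1-(m:ℤ)) (-1) (2-(m:ℤ)) (by omega) Y (hTF.subsetT hY).2)
  -- `F⟦m⟧` is contained in the extended heart of the new t-structure
  have hFmC : shiftSet F (m:ℤ) ⊆ star {X | t.le (-(m:ℤ)) X} T ∩
      shiftSet (star (shiftSet F 1) {X | t.ge 0 X}) ((m:ℤ)-1) := by
    rintro X ⟨Y, hY, ⟨e⟩⟩
    constructor
    · exact mem_star_of_dist (Triangle.mk (𝟙 X) (0 : X ⟶ T₀) 0) (dist_id_zero hzT₀)
        (hLE_Fm ⟨Y, hY, ⟨e⟩⟩) hT₀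
    · refine ⟨Y⟦(1:ℤ)⟧, ?_, ⟨e ≪≫ (shiftAddIso Y 1 ((m:ℤ)-1) m (by omega)).symm⟩⟩
      exact mem_star_of_dist (Triangle.mk (𝟙 (Y⟦(1:ℤ)⟧)) (0 : Y⟦(1:ℤ)⟧ ⟶ T₀) 0)
        (dist_id_zero hzT₀) ⟨Y, hY, ⟨Iso.refl _⟩⟩ (t.ge_of_isZero hzT₀ 0)
  -- `T` is contained in the extended heart of the new t-structure
  have hTC : T ⊆ star {X | t.le (-(m:ℤ)) X} T ∩
      shiftSet (star (shiftSet F 1) {X | t.ge 0 X}) ((m:ℤ)-1) := by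
    intro X hX
    constructor
    · exact mem_star_of_dist (Triangle.mk (0 : T₀ ⟶ X) (𝟙 X) 0) (dist_zero_id hzT₀)
        (t.le_of_isZero hzT₀ _) hX
    · refine ⟨X⟦1-(m:ℤ)⟧, ?_, ⟨(shiftCancelIso X (1-(m:ℤ)) ((m:ℤ)-1) (by omega)).symm⟩⟩
      exact mem_star_of_dist
        (Triangle.mk (0 : F₀⟦(1:ℤ)⟧ ⟶ X⟦1-(m:ℤ)⟧) (𝟙 (X⟦1-(m:ℤ)⟧)) 0)
        (dist_zero_id (isZero_shift_obj hzF₀ 1)) ⟨F₀, hF₀, ⟨Iso.refl _⟩⟩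
        (t.ge_shift (1-(m:ℤ)) (1-(m:ℤ)) 0 (by omega) X (hTF.subsetT hX).2)
  -- forward inclusion
  have hsub1 : star (shiftSet F (m:ℤ)) T ⊆ star {X | t.le (-(m:ℤ)) X} T ∩
      shiftSet (star (shiftSet F 1) {X | t.ge 0 X}) ((m:ℤ)-1) := by
    rintro Z ⟨P, X, f, g, h, hd, ⟨Y, hY, ⟨eP⟩⟩, hX⟩
    constructor
    · exact mem_star_of_dist _ hd (hLE_Fm ⟨Y, hY, ⟨eP⟩⟩) hX
    · refine ⟨Z⟦1-(m:ℤ)⟧, ?_, ⟨(shiftCancelIso Z (1-(m:ℤ)) ((m:ℤ)-1) (by omega)).symm⟩⟩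
      refine mem_star_of_dist ((Triangle.shiftFunctor D (1-(m:ℤ))).obj (Triangle.mk f g h))
        (Triangle.shift_distinguished _ hd _) ?_ ?_
      · exact ⟨Y, hY, ⟨(shiftFunctor D (1-(m:ℤ))).mapIso eP ≪≫
          shiftAddIso Y m (1-(m:ℤ)) 1 (by omega)⟩⟩
      · exact t.ge_shift (1-(m:ℤ)) (1-(m:ℤ)) 0 (by omega) X (hTF.subsetT hX).2
  -- reverse inclusion
  have hsub2 : star {X | t.le (-(m:ℤ)) X} T ∩
      shiftSet (star (shiftSet F 1) {X | t.ge 0 X}) ((m:ℤ)-1) ⊆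
      star (shiftSet F (m:ℤ)) T := by
    rintro Z ⟨⟨A, X, a, x, δ, hd1, hA, hX⟩, W, ⟨E, B, u, v, w, hd2, ⟨Y, hY, ⟨eE⟩⟩, hB⟩, ⟨e⟩⟩
    have hd2' : (Triangle.shiftFunctor D ((m:ℤ)-1)).obj (Triangle.mk u v w) ∈ distTriang D :=
      Triangle.shift_distinguished _ hd2 _
    set Tr2 := (Triangle.shiftFunctor D ((m:ℤ)-1)).obj (Triangle.mk u v w) with hTr2def
    replace e : Z ≅ Tr2.obj₂ := e
    have hd3 : Triangle.mk (Tr2.mor₁ ≫ e.inv) (e.hom ≫ Tr2.mor₂) Tr2.mor₃ ∈ distTriang D :=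
      isomorphic_distinguished _ hd2' _
        (Triangle.isoMk _ _ (Iso.refl _) e (Iso.refl _) (by erw [Category.assoc, e.inv_hom_id, Category.comp_id, Category.id_comp])
          (by erw [Category.comp_id]; rfl)
          (by exact (congrArg (fun k => Tr2.mor₃ ≫ k) ((shiftFunctor D 1).map_id Tr2.obj₁)).trans
                ((Category.comp_id Tr2.mor₃).trans (Category.id_comp Tr2.mor₃).symm)))
    have hPmem : Tr2.obj₁ ∈ shiftSet F (m:ℤ) :=
      ⟨Y, hY, ⟨(shiftFunctor D ((m:ℤ)-1)).mapIso eE ≪≫ shiftAddIso Y 1 ((m:ℤ)-1) m (by omega)⟩⟩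
    have hPle : t.le (-(m:ℤ)) Tr2.obj₁ := hLE_Fm hPmem
    have hQge : t.ge (1-(m:ℤ)) Tr2.obj₃ :=
      t.ge_shift 0 ((m:ℤ)-1) (1-(m:ℤ)) (by omega) B hB
    have hXge : t.ge (1-(m:ℤ)) X := (hTF.subsetT hX).2
    obtain ⟨φ, hφ⟩ : ∃ φ : Tr2.obj₁ ⟶ A, Tr2.mor₁ ≫ e.inv = φ ≫ a := Triangle.coyoneda_exact₂ _ hd1 (Tr2.mor₁ ≫ e.inv)
      (t.zero_of_le_of_ge _ (-(m:ℤ)) (1-(m:ℤ)) (by omega) hPle hXge)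
    obtain ⟨ψ, hψ⟩ : ∃ ψ : A ⟶ Tr2.obj₁, a = ψ ≫ (Tr2.mor₁ ≫ e.inv) := Triangle.coyoneda_exact₂ _ hd3 a
      (t.zero_of_le_of_ge _ (-(m:ℤ)) (1-(m:ℤ)) (by omega) hA hQge)
    have hφ' : Tr2.mor₁ ≫ e.inv = φ ≫ a := hφ
    have hψ' : a = ψ ≫ (Tr2.mor₁ ≫ e.inv) := hψ
    have h3 : ((ψ ≫ φ : A ⟶ A) - 𝟙 A) ≫ a = 0 := by
      rw [Preadditive.sub_comp, Category.id_comp, Category.assoc, ← hφ', ← hψ', sub_self]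
    obtain ⟨g3, hg3⟩ := Triangle.coyoneda_exact₂ _ (inv_rot_of_distTriang _ hd1)
      ((ψ ≫ φ : A ⟶ A) - 𝟙 A) h3
    have hg30 : g3 = 0 := t.zero_of_le_of_ge _ (-(m:ℤ)) (2-(m:ℤ)) (by omega) hA
      (t.ge_shift (1-(m:ℤ)) (-1) (2-(m:ℤ)) (by omega) X hXge)
    have hψφ : ψ ≫ φ = 𝟙 A := by
      rw [hg30, zero_comp] at hg3
      exact sub_eq_zero.1 hg3
    have h4 : ((φ ≫ ψ : Tr2.obj₁ ⟶ Tr2.obj₁) - 𝟙 Tr2.obj₁) ≫ (Tr2.mor₁ ≫ e.inv) = 0 := by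
      rw [Preadditive.sub_comp, Category.id_comp, Category.assoc, ← hψ', ← hφ', sub_self]
    obtain ⟨g4, hg4⟩ := Triangle.coyoneda_exact₂ _ (inv_rot_of_distTriang _ hd3)
      ((φ ≫ ψ : Tr2.obj₁ ⟶ Tr2.obj₁) - 𝟙 Tr2.obj₁) h4
    have hg40 : g4 = 0 := t.zero_of_le_of_ge _ (-(m:ℤ)) (2-(m:ℤ)) (by omega) hPle
      (t.ge_shift (1-(m:ℤ)) (-1) (2-(m:ℤ)) (by omega) _ hQge)
    have hφψ : φ ≫ ψ = 𝟙 Tr2.obj₁ := by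
      rw [hg40, zero_comp] at hg4
      exact sub_eq_zero.1 hg4
    have hAmem : A ∈ shiftSet F (m:ℤ) := by
      obtain ⟨Y', hY', ⟨eY⟩⟩ := hPmem
      exact ⟨Y', hY', ⟨Iso.mk ψ φ hψφ hφψ ≪≫ eY⟩⟩
    exact ⟨A, X, a, x, δ, hd1, hAmem, hX⟩
  have heq := Set.Subset.antisymm hsub1 hsub2
  exact ⟨heq, hFmC, hTC, hv1, hv2, heq.symm⟩
end

section
/- Let X be a full subcategory of the m-extended heart D^{[-(m-1),0]}. Then for any object X in X, the truncation H^{[-(m-2),0]}(X) belongs to Fac_m(X). -/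
open CategoryTheory Limits Pretriangulated Triangulated

variable {D : Type*} [Category D] [Preadditive D] [HasZeroObject D] [HasShift D ℤ]
  [∀ n : ℤ, (shiftFunctor D n).Additive] [Pretriangulated D]

section Aux

variable (t : TStructure D)

/-- Vanishing of morphisms from `D^{≤a}` to `D^{≥b}` when `a < b`. -/
lemma aux_hom_zero {a b : ℤ} (hab : a < b) {P Q : D}
    (hP : t.le a P) (hQ : t.ge b Q) (f : P ⟶ Q) : f = 0 := by
  have hP' : t.le 0 (P⟦a⟧) := t.le_shift a a 0 (by omega) P hP
  have hQ' : t.ge (b - a) (Q⟦a⟧) := t.ge_shift b a (b - a) (by omega) Q hQ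
  have hQ'' : t.ge 1 (Q⟦a⟧) := t.ge_antitone (by omega) _ hQ'
  have hz : (shiftFunctor D a).map f = 0 := t.zero' _ hP' hQ''
  apply (shiftFunctor D a).map_injective
  rw [hz, Functor.map_zero]

/-- `D^{≤n}` is closed under extensions. -/
lemma aux_le_ext (n : ℤ) (T : Triangle D) (hT : T ∈ distTriang D)
    (h₁ : t.le n T.obj₁) (h₃ : t.le n T.obj₃) : t.le n T.obj₂ := by
  obtain ⟨A, B, hA, hB, f, g, h, mem⟩ := t.exists_triangle T.obj₂ n (n + 1) rfl
  have hg : g = 0 := by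
    have h1 : T.mor₁ ≫ g = 0 := aux_hom_zero t (by omega) h₁ hB _
    obtain ⟨g', hg'⟩ := Triangle.yoneda_exact₂ T hT g h1
    rw [hg', aux_hom_zero t (show n < n + 1 by omega) h₃ hB g', comp_zero]
  have hBzero : IsZero B := by
    obtain ⟨r, hr⟩ := Triangle.yoneda_exact₂ _ (rot_of_distTriang _ mem) (𝟙 B)
      (by change g ≫ 𝟙 B = 0; rw [hg, zero_comp])
    rw [IsZero.iff_id_eq_zero, hr,
      aux_hom_zero t (show n - 1 < n + 1 by omega)
        (t.le_shift n 1 (n - 1) (by omega) A hA) hB r]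
    exact comp_zero
  have : IsIso f := (Triangle.isZero₃_iff_isIso₁ _ mem).1 hBzero
  exact (t.le n).prop_of_iso (asIso f) hA

/-- `D^{≥n}` is closed under extensions. -/
lemma aux_ge_ext (n : ℤ) (T : Triangle D) (hT : T ∈ distTriang D)
    (h₁ : t.ge n T.obj₁) (h₃ : t.ge n T.obj₃) : t.ge n T.obj₂ := by
  obtain ⟨A, B, hA, hB, f, g, h, mem⟩ := t.exists_triangle T.obj₂ (n - 1) n (by omega)
  have hf : f = 0 := by
    have h1 : f ≫ T.mor₂ = 0 := aux_hom_zero t (show n - 1 < n by omega) hA h₃ _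
    obtain ⟨f', hf'⟩ := Triangle.coyoneda_exact₂ T hT f h1
    rw [hf', aux_hom_zero t (show n - 1 < n by omega) hA h₁ f', zero_comp]
  have hAzero : IsZero A := by
    obtain ⟨r, hr⟩ := Triangle.coyoneda_exact₂ _ (inv_rot_of_distTriang _ mem) (𝟙 A)
      (by change 𝟙 A ≫ f = 0; rw [Category.id_comp, hf])
    rw [IsZero.iff_id_eq_zero, hr,
      aux_hom_zero t (show n - 1 < n + 1 by omega) hA
        (t.ge_shift n (-1) (n + 1) (by omega) B hB) r]
    exact zero_comp
  have : IsIso g := (Triangle.isZero₁_iff_isIso₂ _ mem).1 hAzero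
  exact (t.ge n).prop_of_iso (asIso g).symm hB

/-- Transport of a distinguished triangle along isomorphisms of the first and
third objects. -/
lemma aux_distTriang_of_iso₁₃ {T : Triangle D} (hT : T ∈ distTriang D)
    {A C : D} (e₁ : A ≅ T.obj₁) (e₃ : T.obj₃ ≅ C) :
    Triangle.mk (e₁.hom ≫ T.mor₁) (T.mor₂ ≫ e₃.hom)
      (e₃.inv ≫ T.mor₃ ≫ (shiftFunctor D (1 : ℤ)).map e₁.inv) ∈ distTriang D := by
  refine isomorphic_distinguished _ hT _ ?_
  refine Triangle.isoMk _ _ e₁ (Iso.refl _) e₃.symm ?_ ?_ ?_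
  · exact Category.comp_id _
  · change (T.mor₂ ≫ e₃.hom) ≫ e₃.inv = 𝟙 T.obj₂ ≫ T.mor₂; simp
  · change (e₃.inv ≫ T.mor₃ ≫ (shiftFunctor D (1 : ℤ)).map e₁.inv) ≫ (shiftFunctor D (1 : ℤ)).map e₁.hom = e₃.inv ≫ T.mor₃
    simp only [Category.assoc, ← Functor.map_comp, e₁.inv_hom_id, Functor.map_id, Category.comp_id]
    simp

end Aux

section Key

variable (t : TStructure D) (m : ℕ) (𝒳 : Set D) (X : D) (hX : X ∈ 𝒳)
  (hXLE : t.le 0 X) (hXGE : t.ge (1 - (m : ℤ)) X)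

include hX hXLE hXGE in
/-- The key induction: any object of `D^{[1-m,-n]}` lies in `Fac_n(𝒳)`, and so does
its biproduct with `X`. -/
lemma aux_key : ∀ n : ℕ,
    (∀ V : D, t.le (-(n : ℤ)) V → t.ge (1 - (m : ℤ)) V → V ∈ Fac t m 𝒳 n) ∧
    (∀ V : D, t.le (-(n : ℤ)) V → t.ge (1 - (m : ℤ)) V → (X ⊞ V) ∈ Fac t m 𝒳 n) := by
  intro n
  induction n with
  | zero =>
    constructor
    · intro V hVLE hVGE
      exact ⟨by simpa using hVLE, hVGE⟩
    · intro V hVLE hVGE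
      have hVLE0 : t.le 0 V := by simpa using hVLE
      exact ⟨aux_le_ext t 0 _ (binaryBiproductTriangle_distinguished X V) hXLE hVLE0,
        aux_ge_ext t _ _ (binaryBiproductTriangle_distinguished X V) hXGE hVGE⟩
  | succ n ih =>
    have heartXV : ∀ V : D, t.le 0 V → t.ge (1 - (m : ℤ)) V →
        (X ⊞ V) ∈ extHeart t m := fun V hVLE hVGE =>
      ⟨aux_le_ext t 0 _ (binaryBiproductTriangle_distinguished X V) hXLE hVLE,
        aux_ge_ext t _ _ (binaryBiproductTriangle_distinguished X V) hXGE hVGE⟩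
    have shiftLE : ∀ V : D, t.le (-(n : ℤ) - 1) V → t.le (-(n : ℤ)) (V⟦(-1 : ℤ)⟧) :=
      fun V hV => t.le_shift (-(n : ℤ) - 1) (-1) (-(n : ℤ)) (by omega) V hV
    have shiftGE : ∀ V : D, t.ge (1 - (m : ℤ)) V → t.ge (1 - (m : ℤ)) (V⟦(-1 : ℤ)⟧) :=
      fun V hV => t.ge_antitone (by omega) _
        (t.ge_shift (1 - (m : ℤ)) (-1) (2 - (m : ℤ)) (by omega) V hV)
    have hcast : -((n + 1 : ℕ) : ℤ) = -(n : ℤ) - 1 := by push_cast; ring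
    constructor
    · -- `V ∈ Fac (n+1)` via the triangle `X ⊞ V⟦-1⟧ ⟶ X ⟶ V`
      intro V hVLE hVGE
      rw [hcast] at hVLE
      have hVLE0 : t.le 0 V := t.le_monotone (by omega) _ hVLE
      have hZ₁ : (X ⊞ V⟦(-1 : ℤ)⟧) ∈ Fac t m 𝒳 n :=
        ih.2 _ (shiftLE V hVLE) (shiftGE V hVGE)
      -- the distinguished triangle
      have hT0 := rot_of_distTriang _
        (binaryBiproductTriangle_distinguished (V⟦(-1 : ℤ)⟧) X)
      have hT := aux_distTriang_of_iso₁₃ hT0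
        (A := X ⊞ V⟦(-1 : ℤ)⟧) (C := V)
        (biprod.braiding X (V⟦(-1 : ℤ)⟧))
        ((shiftFunctorCompIsoId D (-1 : ℤ) (1 : ℤ) (by omega)).app V)
      exact ⟨⟨hVLE0, hVGE⟩, _, X, _, _, _, hT, hX, hZ₁⟩
    · -- `X ⊞ V ∈ Fac (n+1)` via the triangle `V⟦-1⟧ ⟶ X ⟶ X ⊞ V`
      intro V hVLE hVGE
      rw [hcast] at hVLE
      have hVLE0 : t.le 0 V := t.le_monotone (by omega) _ hVLE
      have hZ₁ : (V⟦(-1 : ℤ)⟧) ∈ Fac t m 𝒳 n :=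
        ih.1 _ (shiftLE V hVLE) (shiftGE V hVGE)
      have hT := inv_rot_of_distTriang _ (binaryBiproductTriangle_distinguished X V)
      exact ⟨heartXV V hVLE0 hVGE, _, X, _, _, _, hT, hX, hZ₁⟩

end Key

/-!
Statement 4. Let `𝒳` be a full subcategory of the `m`-extended heart
`D^{[-(m-1),0]}`. Then for any `X ∈ 𝒳`, the truncation `H^{[-(m-2),0]}(X)`
belongs to `Fac_m(𝒳)`.  The truncation `H^{[-(m-2),0]}(X)` is characterized by
the truncation triangle `H^{-(m-1)}(X)[m-1] → X → H^{[-(m-2),0]}(X) → ⬝⟦1⟧`,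
whose first term lies in `D^{[-(m-1),-(m-1)]}` and whose third term lies in
`D^{[-(m-2),0]}`.
-/
theorem stmt4 (t : TStructure D) (ht : t.IsBounded) (m : ℕ) (hm : 0 < m)
    (𝒳 : Set D) (h𝒳 : 𝒳 ⊆ extHeart t m) (X : D) (hX : X ∈ 𝒳)
    (W HX : D) (f : W ⟶ X) (g : X ⟶ HX) (h : HX ⟶ W⟦(1 : ℤ)⟧)
    (hTri : Triangle.mk f g h ∈ distTriang D)
    (hW : t.le (1 - (m : ℤ)) W ∧ t.ge (1 - (m : ℤ)) W)
    (hHX : t.le 0 HX ∧ t.ge (2 - (m : ℤ)) HX) :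
    HX ∈ Fac t m 𝒳 m := by
  obtain ⟨k, rfl⟩ : ∃ k, m = k + 1 := ⟨m - 1, by omega⟩
  obtain ⟨hXLE, hXGE⟩ := h𝒳 hX
  have hWmem : W ∈ Fac t (k + 1) 𝒳 k := by
    refine (aux_key t (k + 1) 𝒳 X hX hXLE hXGE k).1 W ?_ hW.2
    have : (1 - ((k + 1 : ℕ) : ℤ)) = -(k : ℤ) := by push_cast; ring
    rw [← this]
    exact hW.1
  have hHXheart : HX ∈ extHeart t (k + 1) :=
    ⟨hHX.1, t.ge_antitone (by push_cast; omega) _ hHX.2⟩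
  exact ⟨hHXheart, W, X, f, g, h, hTri, hX, hWmem⟩
end

section
/- Let X be a full subcategory of D^{[-(m-1),0]} and Y an object of D^{[-(m-1),0]}. If Hom(X,Y[j])=0 for every X∈X and every integer j≤0, then Hom(Z,Y[j])=0 for every Z∈Fac_m(X) and every integer j≤0. -/
open CategoryTheory Limits Pretriangulated Triangulated

variable {D : Type*} [Category D] [Preadditive D] [HasZeroObject D] [HasShift D ℤ]
  [∀ n : ℤ, (shiftFunctor D n).Additive] [Pretriangulated D]

/-!
Statement 6. Let `𝒳 ⊆ D^{[-(m-1),0]}` and `Y ∈ D^{[-(m-1),0]}`. If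
`Hom(𝒳, Y[j]) = 0` for all `j ≤ 0`, then `Hom(Fac_m(𝒳), Y[j]) = 0`
for all `j ≤ 0`.
-/

lemma tstructure_zero (t : TStructure D) {X Y : D} (a b : ℤ) (h : a < b)
    (hX : t.le a X) (hY : t.ge b Y) (f : X ⟶ Y) : f = 0 := by
  have hX' : t.le 0 (X⟦a⟧) := t.le_shift a a 0 (by omega) X hX
  have hY' : t.ge 1 (Y⟦a⟧) :=
    t.ge_antitone (show (1:ℤ) ≤ b - a by omega) _ (t.ge_shift b a (b - a) (by omega) Y hY)
  have hz : (shiftFunctor D a).map f = 0 := t.zero' _ hX' hY'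
  exact (shiftFunctor D a).map_injective (by rw [hz, Functor.map_zero])

lemma stmt6_aux (t : TStructure D) (m : ℕ)
    (𝒳 : Set D) (Y : D) (hY : Y ∈ extHeart t m)
    (hvan : ∀ X ∈ 𝒳, ∀ j : ℤ, j ≤ 0 → ∀ f : X ⟶ Y⟦j⟧, f = 0) :
    ∀ n : ℕ, n ≤ m → ∀ Z ∈ Fac t m 𝒳 n, ∀ j : ℤ, j ≤ (n : ℤ) - m →
      ∀ f : Z ⟶ Y⟦j⟧, f = 0 := by
  intro n
  induction n with
  | zero =>
    intro _ Z hZ j hj f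
    have hZle : t.le 0 Z := hZ.1
    have hYge : t.ge (1 - (m : ℤ) - j) (Y⟦j⟧) :=
      t.ge_shift (1 - (m : ℤ)) j (1 - (m : ℤ) - j) (by omega) Y hY.2
    exact tstructure_zero t 0 (1 - (m : ℤ) - j) (by push_cast at hj ⊢; omega) hZle hYge f
  | succ n ih =>
    intro hnm Z hZ j hj f
    obtain ⟨hZH, Z₁, X₁, f₁, g₁, h₁, hT, hX₁, hZ₁⟩ := hZ
    have hcomp : (Triangle.mk f₁ g₁ h₁).mor₂ ≫ f = 0 :=
      hvan X₁ hX₁ j (by push_cast at hj; omega) _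
    obtain ⟨g', hg'⟩ := Triangle.yoneda_exact₃ _ hT f hcomp
    have e : Y⟦j⟧ ≅ (Y⟦j - 1⟧)⟦(1 : ℤ)⟧ :=
      (shiftFunctorAdd' D (j - 1) 1 j (by omega)).app Y
    set g'' : Z₁ ⟶ Y⟦j - 1⟧ := (shiftFunctor D (1 : ℤ)).preimage (g' ≫ e.hom) with hg''
    have hzero : g'' = 0 := ih (by omega) Z₁ hZ₁ (j - 1) (by push_cast at hj ⊢; omega) g''
    have : g' ≫ e.hom = 0 := by
      have h0 := congrArg (shiftFunctor D (1 : ℤ)).map hzero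
      rw [hg'', Functor.map_preimage, Functor.map_zero] at h0
      exact h0
    have hg0 : g' = 0 := by
      have := this =≫ e.inv
      simpa using this
    rw [hg', hg0]
    exact comp_zero

theorem stmt6 (t : TStructure D) (ht : t.IsBounded) (m : ℕ) (hm : 0 < m)
    (𝒳 : Set D) (h𝒳 : 𝒳 ⊆ extHeart t m) (Y : D) (hY : Y ∈ extHeart t m)
    (hvan : ∀ X ∈ 𝒳, ∀ j : ℤ, j ≤ 0 → ∀ f : X ⟶ Y⟦j⟧, f = 0) :
    ∀ Z ∈ Fac t m 𝒳 m, ∀ j : ℤ, j ≤ 0 → ∀ f : Z ⟶ Y⟦j⟧, f = 0 := by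
  intro Z hZ j hj f
  exact stmt6_aux t m 𝒳 Y hY hvan m le_rfl Z hZ j (by omega) f
end

section
/- Let P be an (m+1)-term presilting complex in K^b(proj A). Then: (a) H^{[-(m-1),0]}(P) belongs to T(P) and is a projective object of T(P); (b) H^{[-(m-1),0]}(νP[-1]) belongs to F(P) and is an injective object of F(P). -/
open CategoryTheory Limits Pretriangulated Triangulated

variable {k : Type*} [Field k]
variable {D : Type*} [Category D] [Preadditive D] [CategoryTheory.Linear k D]
  [HasZeroObject D] [HasShift D ℤ] [∀ n : ℤ, (shiftFunctor D n).Additive]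
  [Pretriangulated D] [HasFiniteBiproducts D]

/-- `addHull M` is the additive hull `add M` of `M`: all direct summands of
finite direct sums of copies of `M`. -/
def addHull (M : D) : Set D :=
  {X | ∃ (n : ℕ) (i : X ⟶ ⨁ fun _ : Fin n => M) (r : (⨁ fun _ : Fin n => M) ⟶ X),
    i ≫ r = 𝟙 X}

/-- `X` is a projective object of the extension-closed subcategory `E`,
i.e. `X ∈ E` and `Hom(X, Y⟦1⟧) = 0` for all `Y ∈ E`. -/
def ProjIn (E : Set D) (X : D) : Prop :=
  X ∈ E ∧ ∀ Y ∈ E, ∀ f : X ⟶ Y⟦(1 : ℤ)⟧, f = 0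

/-- `X` is an injective object of the extension-closed subcategory `E`,
i.e. `X ∈ E` and `Hom(Y, X⟦1⟧) = 0` for all `Y ∈ E`. -/
def InjIn (E : Set D) (X : D) : Prop :=
  X ∈ E ∧ ∀ Y ∈ E, ∀ f : Y ⟶ X⟦(1 : ℤ)⟧, f = 0

/-- An axiomatization of the bounded derived category `D = D^b(mod A)` of a
finite-dimensional algebra `A` over the field `k`, recording:

* the canonical (bounded) t-structure `t`, with truncation functions
  `trLE n = σ^{≤ n}` and `trGE n = σ^{≥ n}` (characterized by the usual
  truncation triangles);
* the classes `projC a b` (resp. `injC a b`) of objects isomorphic in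
  `D^b(mod A)` to a complex of finitely generated projective (resp. injective)
  modules concentrated in cohomological degrees `[a, b]`, together with the
  basic properties of such complexes (cohomological amplitude, vanishing of
  maps to sufficiently negative (resp. from sufficiently positive) objects,
  behaviour under shifts, direct sums and summands);
* the object `AA` corresponding to the free module `A`, which additively
  generates `projC 0 0 = proj A`, and `nakF AA = νA = DA` generating
  `injC 0 0 = inj A`;
* the Nakayama functor, recorded through its value function `nakF` on objects
  of `K^b(proj A)` (with quasi-inverse value function `nakInvF`), together
  with the Nakayama duality `Hom(X, Y) ≅ D Hom(Y, νX)`, `D = Hom_k(-, k)`,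
  natural in `Y`;
* the minimal projective presentation function `pm m`, where `pm m Z` is the
  stupid truncation `σ_{≥ -m}` of a minimal projective resolution of
  `Z ∈ m-mod A` (an object of `K^{[-m,0]}(proj A)` with
  `H^{[-(m-1),0]}(pm m Z) ≅ Z` having no direct summand of the form `Q⟦m⟧`
  with `Q ∈ proj A`), and dually the minimal injective presentation
  function `im m`. -/
structure ExtModSetting (k : Type*) [Field k] (D : Type*) [Category D]
    [Preadditive D] [CategoryTheory.Linear k D] [HasZeroObject D] [HasShift D ℤ]
    [∀ n : ℤ, (shiftFunctor D n).Additive] [Pretriangulated D]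
    [HasFiniteBiproducts D] : Type _ where
  t : TStructure D
  bounded : ∀ X : D, ∃ a b : ℤ, t.ge a X ∧ t.le b X
  homFinite : ∀ X Y : D, FiniteDimensional k (X ⟶ Y)
  trLE : ℤ → D → D
  trLE_le : ∀ (n : ℤ) (X : D), t.le n (trLE n X)
  trLE_triangle : ∀ (n : ℤ) (X : D), ∃ (W : D) (f : trLE n X ⟶ X) (g : X ⟶ W)
    (h : W ⟶ (trLE n X)⟦(1 : ℤ)⟧),
    (Triangle.mk f g h ∈ distTriang D) ∧ t.ge (n + 1) W
  trGE : ℤ → D → D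
  trGE_ge : ∀ (n : ℤ) (X : D), t.ge n (trGE n X)
  trGE_triangle : ∀ (n : ℤ) (X : D), ∃ (W : D) (f : W ⟶ X) (g : X ⟶ trGE n X)
    (h : trGE n X ⟶ W⟦(1 : ℤ)⟧),
    (Triangle.mk f g h ∈ distTriang D) ∧ t.le (n - 1) W
  projC : ℤ → ℤ → Set D
  injC : ℤ → ℤ → Set D
  projC_iso : ∀ (a b : ℤ) (X Y : D), X ∈ projC a b → (X ≅ Y) → Y ∈ projC a b
  injC_iso : ∀ (a b : ℤ) (X Y : D), X ∈ injC a b → (X ≅ Y) → Y ∈ injC a b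
  projC_mono : ∀ a a' b b' : ℤ, a' ≤ a → b ≤ b' → projC a b ⊆ projC a' b'
  injC_mono : ∀ a a' b b' : ℤ, a' ≤ a → b ≤ b' → injC a b ⊆ injC a' b'
  projC_amp : ∀ (a b : ℤ) (X : D), X ∈ projC a b → t.ge a X ∧ t.le b X
  injC_amp : ∀ (a b : ℤ) (X : D), X ∈ injC a b → t.ge a X ∧ t.le b X
  projC_shift : ∀ (a b n : ℤ) (X : D), X ∈ projC a b → X⟦n⟧ ∈ projC (a - n) (b - n)
  injC_shift : ∀ (a b n : ℤ) (X : D), X ∈ injC a b → X⟦n⟧ ∈ injC (a - n) (b - n)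
  projC_sum : ∀ (a b : ℤ) (X Y : D), X ∈ projC a b → Y ∈ projC a b → (X ⊞ Y) ∈ projC a b
  injC_sum : ∀ (a b : ℤ) (X Y : D), X ∈ injC a b → Y ∈ injC a b → (X ⊞ Y) ∈ injC a b
  projC_summand : ∀ (a b : ℤ) (X Y : D), Y ∈ projC a b →
    (∃ (i : X ⟶ Y) (r : Y ⟶ X), i ≫ r = 𝟙 X) → X ∈ projC a b
  injC_summand : ∀ (a b : ℤ) (X Y : D), Y ∈ injC a b →
    (∃ (i : X ⟶ Y) (r : Y ⟶ X), i ≫ r = 𝟙 X) → X ∈ injC a b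
  projC_vanish : ∀ (a b : ℤ) (X Y : D), X ∈ projC a b → t.le (a - 1) Y →
    ∀ f : X ⟶ Y, f = 0
  injC_vanish : ∀ (a b : ℤ) (X Y : D), Y ∈ injC a b → t.ge (b + 1) X →
    ∀ f : X ⟶ Y, f = 0
  AA : D
  AA_mem : AA ∈ projC 0 0
  projC_zero_zero : ∀ X : D, X ∈ projC 0 0 ↔ X ∈ addHull AA
  nakF : D → D
  nakF_mem : ∀ (a b : ℤ) (X : D), X ∈ projC a b → nakF X ∈ injC a b
  injC_zero_zero : ∀ X : D, X ∈ injC 0 0 ↔ X ∈ addHull (nakF AA)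
  nakInvF : D → D
  nakInvF_mem : ∀ (a b : ℤ) (Y : D), Y ∈ injC a b → nakInvF Y ∈ projC a b
  nakF_nakInvF : ∀ (a b : ℤ) (Y : D), Y ∈ injC a b → Nonempty (nakF (nakInvF Y) ≅ Y)
  nakDuality : ∀ X : D, (∃ a b : ℤ, X ∈ projC a b) →
    ∃ e : ∀ Y : D, (X ⟶ Y) ≃ₗ[k] Module.Dual k (Y ⟶ nakF X),
      ∀ (Y Y' : D) (v : Y ⟶ Y') (u : X ⟶ Y) (g : Y' ⟶ nakF X),
        e Y' (u ≫ v) g = e Y u (v ≫ g)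
  pm : ℤ → D → D
  pm_mem : ∀ (m : ℤ) (Z : D), 1 ≤ m → t.le 0 Z → t.ge (1 - m) Z →
    pm m Z ∈ projC (-m) 0
  pm_triangle : ∀ (m : ℤ) (Z : D), 1 ≤ m → t.le 0 Z → t.ge (1 - m) Z →
    ∃ (W : D) (f : W ⟶ pm m Z) (g : pm m Z ⟶ Z) (h : Z ⟶ W⟦(1 : ℤ)⟧),
      (Triangle.mk f g h ∈ distTriang D) ∧ t.le (-m) W ∧ t.ge (-m) W
  pm_minimal : ∀ (m : ℤ) (Z : D), 1 ≤ m → t.le 0 Z → t.ge (1 - m) Z →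
    ∀ Q : D, Q ∈ projC 0 0 →
      (∃ (i : Q⟦m⟧ ⟶ pm m Z) (r : pm m Z ⟶ Q⟦m⟧), i ≫ r = 𝟙 (Q⟦m⟧)) → IsZero Q
  im : ℤ → D → D
  im_mem : ∀ (m : ℤ) (Z : D), 1 ≤ m → t.le 0 Z → t.ge (1 - m) Z →
    im m Z ∈ injC (1 - m) 1
  im_triangle : ∀ (m : ℤ) (Z : D), 1 ≤ m → t.le 0 Z → t.ge (1 - m) Z →
    ∃ (f : Z ⟶ im m Z) (W : D) (g : im m Z ⟶ W) (h : W ⟶ Z⟦(1 : ℤ)⟧),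
      (Triangle.mk f g h ∈ distTriang D) ∧ t.le 1 W ∧ t.ge 1 W
  im_minimal : ∀ (m : ℤ) (Z : D), 1 ≤ m → t.le 0 Z → t.ge (1 - m) Z →
    ∀ I : D, I ∈ injC 0 0 →
      (∃ (i : I⟦(-1 : ℤ)⟧ ⟶ im m Z) (r : im m Z ⟶ I⟦(-1 : ℤ)⟧),
        i ≫ r = 𝟙 (I⟦(-1 : ℤ)⟧)) → IsZero I

namespace ExtModSetting

variable (S : ExtModSetting k D)

/-- The `m`-extended module category
`m-mod A = {X ∈ D^b(mod A) | Hᵢ(X) = 0 for i ∉ [-(m-1), 0]}`. -/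
def emod (m : ℕ) : Set D := {X | S.t.le 0 X ∧ S.t.ge (1 - (m : ℤ)) X}

/-- The truncation `H^{[p,q]} = σ^{≥ p} ∘ σ^{≤ q}`. -/
def hTr (p q : ℤ) (X : D) : D := S.trGE p (S.trLE q X)

/-- `Fac S m 𝒳 n` is the class of `n`-factors of `𝒳` inside `m-mod A`. -/
def Fac (m : ℕ) (𝒳 : Set D) : ℕ → Set D
  | 0 => S.emod m
  | n + 1 =>
    {Z | Z ∈ S.emod m ∧ ∃ (Z₁ X₁ : D) (f : Z₁ ⟶ X₁) (g : X₁ ⟶ Z) (h : Z ⟶ Z₁⟦(1 : ℤ)⟧),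
      (Triangle.mk f g h ∈ distTriang D) ∧ X₁ ∈ 𝒳 ∧ Z₁ ∈ Fac m 𝒳 n}

/-- `SubObj S m 𝒳 n` is the class of `n`-subobjects of `𝒳` inside `m-mod A`. -/
def SubObj (m : ℕ) (𝒳 : Set D) : ℕ → Set D
  | 0 => S.emod m
  | n + 1 =>
    {Z | Z ∈ S.emod m ∧ ∃ (X₁ Z₁ : D) (f : Z ⟶ X₁) (g : X₁ ⟶ Z₁) (h : Z₁ ⟶ Z⟦(1 : ℤ)⟧),
      (Triangle.mk f g h ∈ distTriang D) ∧ X₁ ∈ 𝒳 ∧ Z₁ ∈ SubObj m 𝒳 n}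

/-- `T(P) = {X ∈ m-mod A | Hom(P, X[j]) = 0 for all j ≥ 1}`. -/
def TP (m : ℕ) (P : D) : Set D :=
  {X | X ∈ S.emod m ∧ ∀ j : ℤ, 1 ≤ j → ∀ f : P ⟶ X⟦j⟧, f = 0}

/-- `F(P) = {X ∈ m-mod A | Hom(P, X[j]) = 0 for all j ≤ 0}`. -/
def FP (m : ℕ) (P : D) : Set D :=
  {X | X ∈ S.emod m ∧ ∀ j : ℤ, j ≤ 0 → ∀ f : P ⟶ X⟦j⟧, f = 0}

/-- A complex is presilting if `Hom(P, P[j]) = 0` for all `j > 0`. -/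
def Presilting (P : D) : Prop := ∀ j : ℤ, 0 < j → ∀ f : P ⟶ P⟦j⟧, f = 0

/-- The objects of `K^b(proj A)`. -/
def Kb : Set D := {X | ∃ a b : ℤ, X ∈ S.projC a b}

/-- A thick subcategory: closed under isomorphisms, shifts, extensions
(hence cones) and direct summands. -/
def IsThickSub (T : Set D) : Prop :=
  (∀ X Y : D, X ∈ T → (X ≅ Y) → Y ∈ T) ∧
  (∀ (X : D) (n : ℤ), X ∈ T → X⟦n⟧ ∈ T) ∧
  (∀ (X Y Z : D) (f : X ⟶ Y) (g : Y ⟶ Z) (h : Z ⟶ X⟦(1 : ℤ)⟧),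
    (Triangle.mk f g h ∈ distTriang D) → X ∈ T → Z ∈ T → Y ∈ T) ∧
  (∀ X Y : D, Y ∈ T → (∃ (i : X ⟶ Y) (r : Y ⟶ X), i ≫ r = 𝟙 X) → X ∈ T)

/-- A presilting complex is silting if the smallest thick subcategory
containing it is all of `K^b(proj A)`. -/
def Silting (P : D) : Prop :=
  Presilting P ∧ ∀ T : Set D, IsThickSub T → P ∈ T → S.Kb ⊆ T

/-- A torsion pair in `m-mod A`. -/
structure IsTorsionPair (m : ℕ) (T F : Set D) : Prop where
  subsetT : T ⊆ S.emod m
  subsetF : F ⊆ S.emod m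
  hom_zero : ∀ X ∈ T, ∀ Y ∈ F, ∀ f : X ⟶ Y, f = 0
  heart_eq : S.emod m = star T F

/-- An s-torsion pair in `m-mod A`. -/
structure IsSTorsionPair (m : ℕ) (T F : Set D)
    extends S.IsTorsionPair m T F : Prop where
  hom_neg_one_zero : ∀ X ∈ T, ∀ Y ∈ F, ∀ f : X ⟶ Y⟦(-1 : ℤ)⟧, f = 0

/-- The Auslander-Reiten translation
`τ_[m](Z) = σ^{≤ 0}(ν p_m(Z)[-1])` of `m-mod A`. -/
def tau (m : ℕ) (Z : D) : D := S.trLE 0 ((S.nakF (S.pm (m : ℤ) Z))⟦(-1 : ℤ)⟧)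

/-- The inverse Auslander-Reiten translation
`τ_[m]⁻(Z) = σ^{≥ -(m-1)}(ν⁻ i_m(Z)[1])` of `m-mod A`. -/
def tauInv (m : ℕ) (Z : D) : D := S.trGE (1 - (m : ℤ)) ((S.nakInvF (S.im (m : ℤ) Z))⟦(1 : ℤ)⟧)

end ExtModSetting

section Aux

/-- Vanishing of morphisms from an object `≤ a` to an object `≥ b` when `a < b`. -/
lemma tzero_aux (t : Triangulated.TStructure D) {X Y : D} (a b : ℤ) (hab : a < b)
    (hX : t.le a X) (hY : t.ge b Y) (f : X ⟶ Y) : f = 0 := by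
  have h1 : t.le 0 (X⟦a⟧) := t.le_shift a a 0 (by omega) X hX
  have h2 : t.ge (b - a) (Y⟦a⟧) := t.ge_shift b a (b - a) (by omega) Y hY
  have h3 : t.ge 1 (Y⟦a⟧) := t.ge_antitone (show (1 : ℤ) ≤ b - a by omega) _ h2
  have h4 : (shiftFunctor D a).map f = 0 := t.zero' _ h1 h3
  apply (shiftFunctor D a).map_injective
  simpa using h4

/-- If `V ≃ₗ Dual k W` and `V` is trivial, then `W` is trivial. -/
lemma dual_zero_aux {V W : Type*} [AddCommGroup V] [AddCommGroup W]
    [Module k V] [Module k W] (e : V ≃ₗ[k] Module.Dual k W)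
    (hV : ∀ v : V, v = 0) (w : W) : w = 0 := by
  have hφ : ∀ φ : Module.Dual k W, φ w = 0 := by
    intro φ
    obtain ⟨v, rfl⟩ := e.surjective φ
    rw [hV v]
    simp
  exact (Module.forall_dual_apply_eq_zero_iff k w).mp hφ

end Aux

/-!
Statement 9. Let `P` be an `(m+1)`-term presilting complex in `K^b(proj A)`.
Then (a) `H^{[-(m-1),0]}(P)` belongs to `T(P)` and is a projective object of
`T(P)`; (b) `H^{[-(m-1),0]}(νP[-1])` belongs to `F(P)` and is an injective
object of `F(P)`.  Here `HP = H^{[-(m-1),0]}(P)` is characterized by the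
truncation triangle `H^{-m}(P)[m] → P → HP → ⬝⟦1⟧` and
`HI = H^{[-(m-1),0]}(νP[-1])` by the truncation triangle
`HI → νP[-1] → H¹(νP[-1])[-1] → HI⟦1⟧`.
-/
theorem stmt9 (S : ExtModSetting k D) (m : ℕ) (hm : 0 < m)
    (P : D) (hP : P ∈ S.projC (-(m : ℤ)) 0) (hpre : ExtModSetting.Presilting P)
    (W HP : D) (w : W ⟶ P) (g : P ⟶ HP) (h : HP ⟶ W⟦(1 : ℤ)⟧)
    (hTri : Triangle.mk w g h ∈ distTriang D)
    (hW : S.t.le (-(m : ℤ)) W ∧ S.t.ge (-(m : ℤ)) W)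
    (hHP : HP ∈ S.emod m)
    (HI W' : D) (f' : HI ⟶ (S.nakF P)⟦(-1 : ℤ)⟧) (g' : (S.nakF P)⟦(-1 : ℤ)⟧ ⟶ W')
    (h' : W' ⟶ HI⟦(1 : ℤ)⟧)
    (hTri' : Triangle.mk f' g' h' ∈ distTriang D)
    (hW' : S.t.le 1 W' ∧ S.t.ge 1 W')
    (hHI : HI ∈ S.emod m) :
    ProjIn (S.TP m P) HP ∧ InjIn (S.FP m P) HI := by
  obtain ⟨hWle, hWge⟩ := hW
  obtain ⟨hW'le, hW'ge⟩ := hW'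
  obtain ⟨hPge, hPle⟩ := S.projC_amp _ _ _ hP
  obtain ⟨e, -⟩ := S.nakDuality P ⟨_, _, hP⟩
  have hfin := S.homFinite
  -- Nakayama-type vanishing : every map `P⟦n⟧ ⟶ νP` vanishes for `n > 0`
  have nak : ∀ n : ℤ, 0 < n → ∀ q : P⟦n⟧ ⟶ S.nakF P, q = 0 := by
    intro n hn q
    have := hfin (P⟦n⟧) (S.nakF P)
    exact dual_zero_aux (e (P⟦n⟧)) (fun v => hpre n hn v) q
  -- hence every map `P ⟶ (νP⟦-1⟧)⟦j⟧` vanishes for `j ≤ 0`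
  have nakP : ∀ j : ℤ, j ≤ 0 → ∀ f : P ⟶ ((S.nakF P)⟦(-1 : ℤ)⟧)⟦j⟧, f = 0 := by
    intro j hj f
    have α : (S.nakF P)⟦(j - 1 : ℤ)⟧ ≅ ((S.nakF P)⟦(-1 : ℤ)⟧)⟦j⟧ :=
      (shiftFunctorAdd' D (-1) j (j - 1) (by ring)).app (S.nakF P)
    have β : ((S.nakF P)⟦(j - 1 : ℤ)⟧)⟦(1 - j : ℤ)⟧ ≅ S.nakF P :=
      (shiftFunctorCompIsoId D (j - 1) (1 - j) (by ring)).app (S.nakF P)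
    have h0 : (shiftFunctor D (1 - j)).map (f ≫ α.inv) ≫ β.hom = 0 :=
      nak (1 - j) (by omega) _
    have h1 : (shiftFunctor D (1 - j)).map (f ≫ α.inv) = 0 := by
      calc (shiftFunctor D (1 - j)).map (f ≫ α.inv)
          = ((shiftFunctor D (1 - j)).map (f ≫ α.inv) ≫ β.hom) ≫ β.inv := by simp
        _ = 0 := by rw [h0, zero_comp]
    have h2 : f ≫ α.inv = 0 := (shiftFunctor D (1 - j)).map_injective (by simpa using h1)
    calc f = (f ≫ α.inv) ≫ α.hom := by simp
      _ = 0 := by rw [h2, zero_comp]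
  -- Part (a), membership : `HP ∈ T(P)`
  have hTPmem : HP ∈ S.TP m P := by
    refine ⟨hHP, ?_⟩
    intro j hj f
    have hT2 : (Pretriangulated.Triangle.shiftFunctor D j).obj (Triangle.mk w g h)
        ∈ distTriang D := Triangle.shift_distinguished _ hTri j
    have hvan : ∀ q : P ⟶ (W⟦j⟧)⟦(1 : ℤ)⟧, q = 0 := by
      intro q
      have l1 : S.t.le (-(m : ℤ) - j) (W⟦j⟧) :=
        S.t.le_shift (-(m : ℤ)) j (-(m : ℤ) - j) (by omega) W hWle
      have l2 : S.t.le (-(m : ℤ) - j - 1) ((W⟦j⟧)⟦(1 : ℤ)⟧) :=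
        S.t.le_shift (-(m : ℤ) - j) 1 (-(m : ℤ) - j - 1) (by omega) _ l1
      have l3 : S.t.le (-(m : ℤ) - 1) ((W⟦j⟧)⟦(1 : ℤ)⟧) :=
        S.t.le_monotone (show -(m : ℤ) - j - 1 ≤ -(m : ℤ) - 1 by omega) _ l2
      exact S.projC_vanish (-(m : ℤ)) 0 P _ hP l3 q
    obtain ⟨q, hq⟩ := Triangle.coyoneda_exact₃ _ hT2 f (hvan _)
    rw [hq, show q = 0 from hpre j (by omega) q]; exact zero_comp
  -- Part (a), projectivity
  have hTPproj : ∀ Y ∈ S.TP m P, ∀ f : HP ⟶ Y⟦(1 : ℤ)⟧, f = 0 := by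
    intro Y hY f
    obtain ⟨q, hq⟩ := Triangle.yoneda_exact₃ _ hTri f (hY.2 1 le_rfl (g ≫ f))
    have hq0 : q = 0 :=
      tzero_aux S.t (-(m : ℤ) - 1) (-(m : ℤ)) (by omega)
        (S.t.le_shift (-(m : ℤ)) 1 (-(m : ℤ) - 1) (by omega) W hWle)
        (S.t.ge_shift (1 - (m : ℤ)) 1 (-(m : ℤ)) (by omega) Y hY.1.2) q
    rw [hq, hq0]; exact comp_zero
  -- Part (b), membership : `HI ∈ F(P)`
  have hFPmem : HI ∈ S.FP m P := by
    refine ⟨hHI, ?_⟩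
    intro j hj f
    have hT2 : (Pretriangulated.Triangle.shiftFunctor D j).obj (Triangle.mk f' g' h')
        ∈ distTriang D := Triangle.shift_distinguished _ hTri' j
    have hT3 := inv_rot_of_distTriang _ hT2
    obtain ⟨q, hq⟩ := Triangle.coyoneda_exact₂ _ hT3 f (nakP j hj _)
    have hq0 : q = 0 := by
      refine tzero_aux S.t 0 (2 - j) (by omega) hPle ?_ q
      have l1 : S.t.ge (1 - j) (W'⟦j⟧) := S.t.ge_shift 1 j (1 - j) (by omega) W' hW'ge
      exact S.t.ge_shift (1 - j) (-1) (2 - j) (by omega) _ l1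
    rw [hq, hq0]; exact zero_comp
  -- Part (b), injectivity
  have hFPinj : ∀ Y ∈ S.FP m P, ∀ f : Y ⟶ HI⟦(1 : ℤ)⟧, f = 0 := by
    intro Y hY f
    have hYnu : ∀ v : Y ⟶ S.nakF P, v = 0 := by
      intro v
      have hsub : ∀ u : P ⟶ Y, u = 0 := by
        intro u
        have h0 : u ≫ ((shiftFunctorZero D ℤ).app Y).inv = 0 := hY.2 0 le_rfl _
        calc u = (u ≫ ((shiftFunctorZero D ℤ).app Y).inv) ≫ ((shiftFunctorZero D ℤ).app Y).hom := by
              simp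
          _ = 0 := by rw [h0, zero_comp]
      have := hfin Y (S.nakF P)
      exact dual_zero_aux (e Y) hsub v
    have hz : ∀ v : Y ⟶ ((S.nakF P)⟦(-1 : ℤ)⟧)⟦(1 : ℤ)⟧, v = 0 := by
      intro v
      have γ : ((S.nakF P)⟦(-1 : ℤ)⟧)⟦(1 : ℤ)⟧ ≅ S.nakF P :=
        (shiftFunctorCompIsoId D (-1) 1 (by ring)).app (S.nakF P)
      calc v = (v ≫ γ.hom) ≫ γ.inv := by simp
        _ = 0 := by rw [hYnu (v ≫ γ.hom), zero_comp]
    obtain ⟨q, hq⟩ := Triangle.coyoneda_exact₃ _ (rot_of_distTriang _ hTri') f (hz _)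
    have hq0 : q = 0 := tzero_aux S.t 0 1 (by omega) hY.1.1 hW'ge q
    rw [hq, hq0]; exact zero_comp
  exact ⟨⟨hTPmem, hTPproj⟩, ⟨hFPmem, hFPinj⟩⟩
end

section
/- Let P be an (m+1)-term silting complex in K^b(proj A), and for X∈m-mod A let t(X)→X→f(X)→t(X)[1] be the canonical triangle with respect to the s-torsion pair (T(P),F(P)). Then t(νA[m-1]) is an injective object of T(P), and f(A) is a projective object of F(P). -/
open CategoryTheory Limits Pretriangulated Triangulated

variable {k : Type*} [Field k]
variable {D : Type*} [Category D] [Preadditive D] [CategoryTheory.Linear k D]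
  [HasZeroObject D] [HasShift D ℤ] [∀ n : ℤ, (shiftFunctor D n).Additive]
  [Pretriangulated D] [HasFiniteBiproducts D]

section Auxiliary
set_option linter.unusedSectionVars false

variable (S : ExtModSetting k D)

/-- The general vanishing lemma for the t-structure. -/
lemma tzero {n₀ n₁ : ℤ} (h : n₀ < n₁) {X Y : D} (hX : S.t.le n₀ X) (hY : S.t.ge n₁ Y)
    (f : X ⟶ Y) : f = 0 := by
  have hX' : S.t.le 0 (X⟦n₀⟧) := S.t.le_shift n₀ n₀ 0 (by omega) X hX
  have hY' : S.t.ge 1 (Y⟦n₀⟧) := by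
    have h2 := S.t.ge_shift n₁ n₀ (n₁ - n₀) (by omega) Y hY
    exact S.t.ge_antitone (show (1:ℤ) ≤ n₁ - n₀ by omega) (Y⟦n₀⟧) h2
  have hz : (shiftFunctor D n₀).map f = 0 := S.t.zero' _ hX' hY'
  exact (shiftFunctor D n₀).map_injective (by rw [hz, Functor.map_zero])

lemma le_shift {n : ℤ} {X : D} (hX : S.t.le n X) (a n' : ℤ) (h : n' = n - a) :
    S.t.le n' (X⟦a⟧) := S.t.le_shift n a n' (by omega) X hX

lemma ge_shift {n : ℤ} {X : D} (hX : S.t.ge n X) (a n' : ℤ) (h : n' = n - a) :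
    S.t.ge n' (X⟦a⟧) := S.t.ge_shift n a n' (by omega) X hX

/-- Transfer of hom-vanishing along shifts (first variable). -/
lemma shift_transfer₁ {A B : D} {u v : ℤ} (huv : u + v = 0)
    (h : ∀ g : A ⟶ B⟦v⟧, g = 0) (f : A⟦u⟧ ⟶ B) : f = 0 := by
  have h1 : (shiftFunctorCompIsoId D u v huv).inv.app A ≫ (shiftFunctor D v).map f = 0 :=
    h _
  have h2 : (shiftFunctor D v).map f =
      (shiftFunctorCompIsoId D u v huv).hom.app A ≫
        ((shiftFunctorCompIsoId D u v huv).inv.app A ≫ (shiftFunctor D v).map f) := by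
    rw [← Category.assoc, Iso.hom_inv_id_app, Category.id_comp]
  rw [h1, comp_zero] at h2
  exact (shiftFunctor D v).map_injective (by rw [h2, Functor.map_zero])

/-- Transfer of hom-vanishing along shifts (second variable). -/
lemma shift_transfer₂ {A B : D} {u v : ℤ} (huv : u + v = 0)
    (h : ∀ g : A⟦u⟧ ⟶ B, g = 0) (f : A ⟶ B⟦v⟧) : f = 0 := by
  have h1 : (shiftFunctor D u).map f ≫ (shiftFunctorCompIsoId D v u (by omega)).hom.app B = 0 :=
    h _
  have h2 : (shiftFunctor D u).map f = 0 := by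
    calc (shiftFunctor D u).map f
        = ((shiftFunctor D u).map f ≫ (shiftFunctorCompIsoId D v u (by omega)).hom.app B) ≫
            (shiftFunctorCompIsoId D v u (by omega)).inv.app B := by simp
      _ = 0 := by rw [h1, zero_comp]
  exact (shiftFunctor D u).map_injective (by rw [h2, Functor.map_zero])


section WeightMachinery
set_option linter.unusedSectionVars false
open ZeroObject

variable (P : D)

/-- Level-`j` vanishing: there is no nonzero map from `P⟦j⟧` to `X`. -/
def lvan (j : ℤ) (X : D) : Prop := ∀ p : P⟦j⟧ ⟶ X, p = 0

/-- The "low parts": objects orthogonal to everything with no `P`-levels below `c`. -/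
def LowC (c : ℤ) (L : D) : Prop :=
  ∀ V : D, (∀ j : ℤ, j < c → lvan P j V) → ∀ f : L ⟶ V, f = 0

/-- The "high parts": objects with no incoming `P`-levels below `c` which are
orthogonal to everything whose `P`-levels are all below `c`. -/
def HighC (c : ℤ) (H : D) : Prop :=
  (∀ j : ℤ, j < c → lvan P j H) ∧
  (∀ V : D, (∀ j : ℤ, c ≤ j → lvan P j V) → ∀ f : H ⟶ V, f = 0)

/-- Objects admitting weight decompositions at every cut. -/
def DecC (W : D) : Prop := ∀ c : ℤ,
  ∃ (L H : D) (f : L ⟶ W) (g : W ⟶ H) (h : H ⟶ L⟦(1:ℤ)⟧),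
    (Triangle.mk f g h ∈ distTriang D) ∧ LowC P c L ∧ HighC P c H

/-- Direct summands of objects admitting weight decompositions. -/
def PhiC (X : D) : Prop :=
  ∃ (W : D) (i : X ⟶ W) (r : W ⟶ X), i ≫ r = 𝟙 X ∧ DecC P W

variable {P}

/-- `X⟦a⟧⟦b⟧ ≅ X⟦c⟧` when `a + b = c`. -/
def shiftShiftIso (X : D) (a b c : ℤ) (h : a + b = c) : (X⟦a⟧)⟦b⟧ ≅ X⟦c⟧ :=
  ((shiftFunctorAdd' D a b c h).app X).symm

lemma lvan_src_iso {A A' X : D} (e : A ≅ A') (h : ∀ p : A' ⟶ X, p = 0)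
    (p : A ⟶ X) : p = 0 := by
  have h1 : e.inv ≫ p = 0 := h _
  calc p = e.hom ≫ (e.inv ≫ p) := by
        rw [← Category.assoc, Iso.hom_inv_id, Category.id_comp]
    _ = 0 := by rw [h1, comp_zero]

lemma lvan_shift {j s j' : ℤ} (hj : j + s = j') {X : D} (h : lvan P j X) :
    lvan P j' (X⟦s⟧) := by
  intro p
  refine shift_transfer₂ (u := -s) (v := s) (by ring) ?_ p
  intro g
  exact lvan_src_iso (shiftShiftIso P j' (-s) j (by omega)) (fun q => h q) g

lemma lvan_zero {X : D} (hX : IsZero X) (j : ℤ) : lvan P j X :=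
  fun p => hX.eq_of_tgt p 0

lemma LowC_zero {L : D} (hL : IsZero L) (c : ℤ) : LowC P c L :=
  fun _ _ f => hL.eq_of_src f 0

lemma HighC_zero {H : D} (hH : IsZero H) (c : ℤ) : HighC P c H :=
  ⟨fun j _ => lvan_zero hH j, fun _ _ f => hH.eq_of_src f 0⟩

lemma LowC_ext {L₁ L₂ L₃ : D} {f : L₁ ⟶ L₂} {g : L₂ ⟶ L₃} {h : L₃ ⟶ L₁⟦(1:ℤ)⟧}
    (hT : Triangle.mk f g h ∈ distTriang D) {c : ℤ}
    (h₁ : LowC P c L₁) (h₃ : LowC P c L₃) : LowC P c L₂ := by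
  intro V hV φ
  have h1 : f ≫ φ = 0 := h₁ V hV _
  obtain ⟨ψ, hψ⟩ := Triangle.yoneda_exact₂ _ hT φ h1
  rw [hψ, h₃ V hV ψ]; exact comp_zero

lemma LowC_shift {c : ℤ} {L : D} (hL : LowC P c L) {s c' : ℤ} (hc : c + s = c') :
    LowC P c' (L⟦s⟧) := by
  intro V hV f
  refine shift_transfer₁ (u := s) (v := -s) (by ring) ?_ f
  intro g
  refine hL (V⟦-s⟧) ?_ g
  intro j hj
  exact lvan_shift (by ring) (hV (j + s) (by omega))

lemma HighC_shift {c : ℤ} {H : D} (hH : HighC P c H) {s c' : ℤ} (hc : c + s = c') :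
    HighC P c' (H⟦s⟧) := by
  constructor
  · intro j hj
    exact lvan_shift (j := j - s) (by ring) (hH.1 (j - s) (by omega))
  · intro V hV f
    refine shift_transfer₁ (u := s) (v := -s) (by ring) ?_ f
    intro g
    refine hH.2 (V⟦-s⟧) ?_ g
    intro j hj
    exact lvan_shift (by ring) (hV (j + s) (by omega))

/-- transport of `DecC` along an isomorphism. -/
lemma DecC_iso {W W' : D} (e : W ≅ W') (hW : DecC P W) : DecC P W' := by
  intro c
  obtain ⟨L, H, f, g, h, hT, hL, hH⟩ := hW c
  refine ⟨L, H, f ≫ e.hom, e.inv ≫ g, h, ?_, hL, hH⟩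
  refine isomorphic_distinguished _ hT _ ?_
  exact Triangle.isoMk _ _ (Iso.refl _) e.symm (Iso.refl _) (by exact (by simp : (f ≫ e.hom) ≫ e.inv = 𝟙 L ≫ f)) (by exact (by simp : (e.inv ≫ g) ≫ 𝟙 H = e.inv ≫ g)) (by exact (by simp : h ≫ (shiftFunctor D (1:ℤ)).map (𝟙 L) = 𝟙 H ≫ h))

lemma DecC_shift_one {W : D} (hW : DecC P W) : DecC P (W⟦(1:ℤ)⟧) := by
  intro c
  obtain ⟨L, H, f, g, h, hT, hL, hH⟩ := hW (c - 1)
  exact ⟨L⟦(1:ℤ)⟧, H⟦(1:ℤ)⟧, -(shiftFunctor D (1:ℤ)).map f, -(shiftFunctor D (1:ℤ)).map g,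
    -(shiftFunctor D (1:ℤ)).map h,
    rot_of_distTriang _ (rot_of_distTriang _ (rot_of_distTriang _ hT)),
    LowC_shift hL (by ring), HighC_shift hH (by ring)⟩

lemma DecC_shift_negone {W : D} (hW : DecC P W) : DecC P (W⟦(-1:ℤ)⟧) := by
  intro c
  obtain ⟨L, H, f, g, h, hT, hL, hH⟩ := hW (c + 1)
  have h3 := inv_rot_of_distTriang _ (inv_rot_of_distTriang _ (inv_rot_of_distTriang _
    (show Triangle.mk f g h ∈ distTriang D from hT)))
  exact ⟨L⟦(-1:ℤ)⟧, H⟦(-1:ℤ)⟧, _, _, _, h3, LowC_shift hL (by ring),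
    HighC_shift hH (by ring)⟩

lemma DecC_shift {W : D} (hW : DecC P W) (n : ℤ) : DecC P (W⟦n⟧) := by
  induction n using Int.induction_on with
  | zero => exact DecC_iso ((shiftFunctorZero D ℤ).app W).symm hW
  | succ n ih => exact DecC_iso (shiftShiftIso W n 1 (n + 1) rfl) (DecC_shift_one ih)
  | pred n ih => exact DecC_iso (shiftShiftIso W (-n) (-1) (-n - 1) (by ring)) (DecC_shift_negone ih)

lemma lvan_P_neg (hpre : ∀ j : ℤ, 0 < j → ∀ f : P ⟶ P⟦j⟧, f = 0)
    {j : ℤ} (hj : j < 0) : lvan P j P := by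
  intro p
  refine shift_transfer₁ (u := j) (v := -j) (by ring) ?_ p
  intro g
  exact hpre (-j) (by omega) g

lemma hom_P_zero {V : D} (h : lvan P 0 V) (f : P ⟶ V) : f = 0 := by
  refine lvan_src_iso (A := P) (A' := P⟦(0:ℤ)⟧) ((shiftFunctorZero D ℤ).app P).symm
    (fun p => h p) f

lemma DecC_P (hpre : ∀ j : ℤ, 0 < j → ∀ f : P ⟶ P⟦j⟧, f = 0) : DecC P P := by
  intro c
  by_cases hc : c ≤ 0
  · refine ⟨0, P, 0, 𝟙 P, 0, contractible_distinguished₁ P, LowC_zero (isZero_zero D) c,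
      ?_, ?_⟩
    · intro j hj
      exact lvan_P_neg hpre (by omega)
    · intro V hV f
      exact hom_P_zero (hV 0 (by omega)) f
  · refine ⟨P, 0, 𝟙 P, 0, 0, contractible_distinguished P, ?_,
      HighC_zero (isZero_zero D) c⟩
    intro V hV f
    exact hom_P_zero (hV 0 (by omega)) f

/-- The summand-of-extension trick: an extension of direct summands is, up to
a unipotent automorphism, a direct summand of an extension. -/
lemma smd_ext {X Y Z : D} {f : X ⟶ Y} {g : Y ⟶ Z} {h : Z ⟶ X⟦(1:ℤ)⟧}
    (hT : Triangle.mk f g h ∈ distTriang D)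
    {W₁ W₃ : D} (i₁ : X ⟶ W₁) (r₁ : W₁ ⟶ X) (hir₁ : i₁ ≫ r₁ = 𝟙 X)
    (i₃ : Z ⟶ W₃) (r₃ : W₃ ⟶ Z) (hir₃ : i₃ ≫ r₃ = 𝟙 Z) :
    ∃ (W₂ : D) (u : W₁ ⟶ W₂) (v : W₂ ⟶ W₃) (w : W₃ ⟶ W₁⟦(1:ℤ)⟧)
      (i₂ : Y ⟶ W₂) (r₂ : W₂ ⟶ Y),
      (Triangle.mk u v w ∈ distTriang D) ∧ i₂ ≫ r₂ = 𝟙 Y := by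
  set w : W₃ ⟶ W₁⟦(1:ℤ)⟧ := r₃ ≫ h ≫ (shiftFunctor D (1:ℤ)).map i₁ with hw
  obtain ⟨W₂, u, v, hTW⟩ := distinguished_cocone_triangle₂ w
  obtain ⟨j, hj₁, hj₂⟩ := complete_distinguished_triangle_morphism₂
    (Triangle.mk f g h) (Triangle.mk u v w) hT hTW i₁ i₃
    (by
      show h ≫ (shiftFunctor D (1:ℤ)).map i₁ = i₃ ≫ w
      rw [hw, ← Category.assoc, ← Category.assoc, hir₃, Category.id_comp])
  dsimp only [Triangle.mk] at j hj₁ hj₂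
  obtain ⟨q, hq₁, hq₂⟩ := complete_distinguished_triangle_morphism₂
    (Triangle.mk u v w) (Triangle.mk f g h) hTW hT r₁ r₃
    (by
      show w ≫ (shiftFunctor D (1:ℤ)).map r₁ = r₃ ≫ h
      rw [hw]
      rw [Category.assoc, Category.assoc, ← Functor.map_comp, hir₁,
        CategoryTheory.Functor.map_id, Category.comp_id])
  dsimp only [Triangle.mk] at q hq₁ hq₂
  set e : Y ⟶ Y := j ≫ q with he
  have hfe : f ≫ e = f := by
    rw [he, ← Category.assoc, hj₁, Category.assoc, hq₁, ← Category.assoc, hir₁,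
      Category.id_comp]
  have heg : e ≫ g = g := by
    rw [he, Category.assoc, ← hq₂, ← Category.assoc, ← hj₂, Category.assoc, hir₃,
      Category.comp_id]
  have hng : (e - 𝟙 Y) ≫ g = 0 := by rw [Preadditive.sub_comp, heg, Category.id_comp, sub_self]
  obtain ⟨s, hs⟩ := Triangle.coyoneda_exact₂ _ hT (e - 𝟙 Y) hng
  dsimp only [Triangle.mk] at s hs
  have hfn : f ≫ (e - 𝟙 Y) = 0 := by
    rw [Preadditive.comp_sub, hfe, Category.comp_id, sub_self]
  have hnn : (e - 𝟙 Y) ≫ (e - 𝟙 Y) = 0 := by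
    nth_rewrite 1 [hs]
    rw [Category.assoc, hfn, comp_zero]
  have he2 : e = 𝟙 Y + (e - 𝟙 Y) := by abel
  have hen : e ≫ (e - 𝟙 Y) = e - 𝟙 Y := by
    nth_rewrite 1 [he2]
    rw [Preadditive.add_comp, Category.id_comp, hnn, add_zero]
  have key : e ≫ (𝟙 Y - (e - 𝟙 Y)) = 𝟙 Y := by
    rw [Preadditive.comp_sub, Category.comp_id, hen]
    abel
  refine ⟨W₂, u, v, w, j, q ≫ (𝟙 Y - (e - 𝟙 Y)), hTW, ?_⟩
  rw [← Category.assoc, ← he, key]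

/-- Weight decompositions glue along extensions (octahedron-free). -/
lemma DecC_ext {W₁ W₂ W₃ : D} {u : W₁ ⟶ W₂} {v : W₂ ⟶ W₃} {w : W₃ ⟶ W₁⟦(1:ℤ)⟧}
    (hTW : Triangle.mk u v w ∈ distTriang D)
    (h₁ : DecC P W₁) (h₃ : DecC P W₃) : DecC P W₂ := by
  intro c
  obtain ⟨L₁, H₁, x₁, y₁, z₁, hT₁, hL₁, hH₁⟩ := h₁ c
  obtain ⟨L₃, H₃, x₃, y₃, z₃, hT₃, hL₃, hH₃⟩ := h₃ c
  -- rotated distinguished triangles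
  have hT₁rot1 : Triangle.mk y₁ z₁ (-(x₁⟦(1:ℤ)⟧')) ∈ distTriang D := rot_of_distTriang _ hT₁
  have hT₁rot2 : Triangle.mk z₁ (-(x₁⟦(1:ℤ)⟧')) (-(y₁⟦(1:ℤ)⟧')) ∈ distTriang D :=
    rot_of_distTriang _ hT₁rot1
  have hT₁rot3 : Triangle.mk (-(x₁⟦(1:ℤ)⟧')) (-(y₁⟦(1:ℤ)⟧')) (-(z₁⟦(1:ℤ)⟧')) ∈ distTriang D :=
    rot_of_distTriang _ hT₁rot2
  have hTWrot2 : Triangle.mk w (-(u⟦(1:ℤ)⟧')) (-(v⟦(1:ℤ)⟧')) ∈ distTriang D :=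
    rot_of_distTriang _ (rot_of_distTriang _ hTW)
  have hvw : v ≫ w = 0 := comp_distTriang_mor_zero₂₃ _ hTW
  -- vanishing into H₁⟦1⟧
  have hH₁s : ∀ j : ℤ, j < c → lvan P j (H₁⟦(1:ℤ)⟧) := fun j hj =>
    lvan_shift (j := j - 1) (by ring) (hH₁.1 (j - 1) (by omega))
  -- construction of δ
  have hobs : (x₃ ≫ w) ≫ (y₁⟦(1:ℤ)⟧') = 0 := hL₃ _ hH₁s _
  obtain ⟨δ', hδ'⟩ := Triangle.coyoneda_exact₂ _ hT₁rot3 (x₃ ≫ w)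
    (by dsimp only [Triangle.mk]; rw [Preadditive.comp_neg, hobs, neg_zero]; rfl)
  dsimp only [Triangle.mk] at δ' hδ'
  have hδ : (-δ') ≫ (x₁⟦(1:ℤ)⟧') = x₃ ≫ w := by
    rw [Preadditive.neg_comp, ← Preadditive.comp_neg, ← hδ']
  set δ : L₃ ⟶ L₁⟦(1:ℤ)⟧ := -δ' with hδdef
  clear_value δ
  clear hδ' hδdef
  -- the low part
  obtain ⟨L₂, l, l', hTL⟩ := distinguished_cocone_triangle₂ δ
  have hTLrot3 : Triangle.mk (-(l⟦(1:ℤ)⟧')) (-(l'⟦(1:ℤ)⟧')) (-(δ⟦(1:ℤ)⟧')) ∈ distTriang D :=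
    rot_of_distTriang _ (rot_of_distTriang _ (rot_of_distTriang _ hTL))
  have hδl : δ ≫ (l⟦(1:ℤ)⟧') = 0 := comp_distTriang_mor_zero₃₁ _ hTL
  -- x₂ via completion
  obtain ⟨x₂, hx₁u, hx₂v⟩ := complete_distinguished_triangle_morphism₂
    (Triangle.mk l l' δ) (Triangle.mk u v w) hTL hTW x₁ x₃ (by dsimp only [Triangle.mk]; exact hδ)
  dsimp only [Triangle.mk] at x₂ hx₁u hx₂v
  -- the high part
  obtain ⟨H₂, y₂, z₂, hT₂⟩ := distinguished_cocone_triangle x₂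
  have hz₂x₂ : z₂ ≫ (x₂⟦(1:ℤ)⟧') = 0 := comp_distTriang_mor_zero₃₁ _ hT₂
  have hx₂y₂ : x₂ ≫ y₂ = 0 := comp_distTriang_mor_zero₁₂ _ hT₂
  -- the comparison maps κ and lam
  obtain ⟨κ, hκ₁, hκ₂⟩ := complete_distinguished_triangle_morphism
    (Triangle.mk x₁ y₁ z₁) (Triangle.mk x₂ y₂ z₂) hT₁ hT₂ l u hx₁u.symm
  dsimp only [Triangle.mk] at κ hκ₁ hκ₂
  obtain ⟨lam, hlam₁, hlam₂⟩ := complete_distinguished_triangle_morphism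
    (Triangle.mk x₂ y₂ z₂) (Triangle.mk x₃ y₃ z₃) hT₂ hT₃ l' v hx₂v.symm
  dsimp only [Triangle.mk] at lam hlam₁ hlam₂
  refine ⟨L₂, H₂, x₂, y₂, z₂, hT₂, LowC_ext hTL hL₁ hL₃, ?_, ?_⟩
  · -- cond1 chase : no maps from P⟦j⟧, j < c, into H₂
    intro j hj p
    have hA : p ≫ lam = 0 := hH₃.1 j hj _
    have ho1 : (p ≫ z₂) ≫ (l'⟦(1:ℤ)⟧') = 0 := by
      rw [Category.assoc, hlam₂, ← Category.assoc, hA, zero_comp]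
    obtain ⟨o₁', ho₁'⟩ := Triangle.coyoneda_exact₂ _ hTLrot3 (p ≫ z₂)
      (by dsimp only [Triangle.mk]; rw [Preadditive.comp_neg, ho1, neg_zero]; rfl)
    dsimp only [Triangle.mk] at o₁' ho₁'
    have ho₁ : p ≫ z₂ = (-o₁') ≫ (l⟦(1:ℤ)⟧') := by
      rw [Preadditive.neg_comp, ← Preadditive.comp_neg, ← ho₁']
    set o₁ : P⟦j⟧ ⟶ L₁⟦(1:ℤ)⟧ := -o₁' with ho₁def
    clear_value o₁
    clear ho₁' ho₁def
    have h1 : (o₁ ≫ (x₁⟦(1:ℤ)⟧')) ≫ (u⟦(1:ℤ)⟧') = 0 := by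
      have e1 : o₁ ≫ ((l ≫ x₂)⟦(1:ℤ)⟧') = 0 := by
        rw [Functor.map_comp, ← Category.assoc, ← ho₁, Category.assoc, hz₂x₂, comp_zero]
      calc (o₁ ≫ (x₁⟦(1:ℤ)⟧')) ≫ (u⟦(1:ℤ)⟧')
          = o₁ ≫ ((x₁ ≫ u)⟦(1:ℤ)⟧') := by rw [Functor.map_comp, Category.assoc]
        _ = o₁ ≫ ((l ≫ x₂)⟦(1:ℤ)⟧') := by rw [← hx₁u]
        _ = 0 := e1
    obtain ⟨w₃, hw₃⟩ := Triangle.coyoneda_exact₂ _ hTWrot2 (o₁ ≫ (x₁⟦(1:ℤ)⟧'))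
      (by dsimp only [Triangle.mk]; rw [Preadditive.comp_neg, h1, neg_zero]; rfl)
    dsimp only [Triangle.mk] at w₃ hw₃
    have hw₃y : w₃ ≫ y₃ = 0 := hH₃.1 j hj _
    obtain ⟨ℓ₃, hℓ₃⟩ := Triangle.coyoneda_exact₂ _ hT₃ w₃
      (by dsimp only [Triangle.mk]; exact hw₃y)
    dsimp only [Triangle.mk] at ℓ₃ hℓ₃
    have h2 : (o₁ - ℓ₃ ≫ δ) ≫ (x₁⟦(1:ℤ)⟧') = 0 := by
      rw [Preadditive.sub_comp, hw₃, Category.assoc, hδ, hℓ₃, Category.assoc, sub_self]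
    obtain ⟨h₁m, hh₁m⟩ := Triangle.coyoneda_exact₃ _ hT₁rot1 (o₁ - ℓ₃ ≫ δ)
      (by dsimp only [Triangle.mk]; rw [Preadditive.comp_neg, h2, neg_zero]; rfl)
    dsimp only [Triangle.mk] at h₁m hh₁m
    have hm0 : h₁m = 0 := hH₁.1 j hj _
    have ho₁δ : o₁ = ℓ₃ ≫ δ := by
      have : o₁ - ℓ₃ ≫ δ = 0 := by rw [hh₁m, hm0, zero_comp]
      rw [← sub_eq_zero]; exact this
    have ho0 : p ≫ z₂ = 0 := by
      rw [ho₁, ho₁δ, Category.assoc, hδl, comp_zero]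
    obtain ⟨gW, hgW⟩ := Triangle.coyoneda_exact₃ _ hT₂ p
      (by dsimp only [Triangle.mk]; exact ho0)
    dsimp only [Triangle.mk] at gW hgW
    have h3 : (gW ≫ v) ≫ y₃ = 0 := hH₃.1 j hj _
    obtain ⟨ℓ₃', hℓ₃'⟩ := Triangle.coyoneda_exact₂ _ hT₃ (gW ≫ v)
      (by dsimp only [Triangle.mk]; exact h3)
    dsimp only [Triangle.mk] at ℓ₃' hℓ₃'
    have h4 : (ℓ₃' ≫ δ) ≫ (x₁⟦(1:ℤ)⟧') = 0 := by
      rw [Category.assoc, hδ, ← Category.assoc, ← hℓ₃', Category.assoc, hvw, comp_zero]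
    obtain ⟨h₁', hh₁'⟩ := Triangle.coyoneda_exact₃ _ hT₁rot1 (ℓ₃' ≫ δ)
      (by dsimp only [Triangle.mk]; rw [Preadditive.comp_neg, h4, neg_zero]; rfl)
    dsimp only [Triangle.mk] at h₁' hh₁'
    have hℓδ0 : ℓ₃' ≫ δ = 0 := by rw [hh₁', hH₁.1 j hj h₁', zero_comp]
    obtain ⟨ℓ₂, hℓ₂⟩ := Triangle.coyoneda_exact₃ _ hTL ℓ₃'
      (by dsimp only [Triangle.mk]; exact hℓδ0)
    dsimp only [Triangle.mk] at ℓ₂ hℓ₂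
    have h5 : (gW - ℓ₂ ≫ x₂) ≫ v = 0 := by
      calc (gW - ℓ₂ ≫ x₂) ≫ v = gW ≫ v - (ℓ₂ ≫ x₂) ≫ v := by rw [Preadditive.sub_comp]
        _ = ℓ₃' ≫ x₃ - ℓ₂ ≫ (l' ≫ x₃) := by rw [hℓ₃', Category.assoc, ← hx₂v]
        _ = (ℓ₂ ≫ l') ≫ x₃ - ℓ₂ ≫ (l' ≫ x₃) := by rw [← hℓ₂]
        _ = 0 := by rw [Category.assoc, sub_self]
    obtain ⟨w₁, hw₁⟩ := Triangle.coyoneda_exact₂ _ hTW (gW - ℓ₂ ≫ x₂)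
      (by dsimp only [Triangle.mk]; exact h5)
    dsimp only [Triangle.mk] at w₁ hw₁
    have hw₁y₁ : w₁ ≫ y₁ = 0 := hH₁.1 j hj _
    calc p = gW ≫ y₂ := hgW
      _ = ((gW - ℓ₂ ≫ x₂) + ℓ₂ ≫ x₂) ≫ y₂ := by rw [sub_add_cancel]
      _ = (w₁ ≫ u) ≫ y₂ + ℓ₂ ≫ (x₂ ≫ y₂) := by
          rw [Preadditive.add_comp, hw₁]
          simp only [Category.assoc]
      _ = w₁ ≫ (u ≫ y₂) := by rw [hx₂y₂, comp_zero, add_zero, Category.assoc]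
      _ = (w₁ ≫ y₁) ≫ κ := by rw [← hκ₁, Category.assoc]
      _ = 0 := by rw [hw₁y₁, zero_comp]
  · -- cond2 chase : no maps from H₂ to objects with only P-levels < c
    intro V hV ξ
    have hκξ : κ ≫ ξ = 0 := hH₁.2 V hV _
    have h6 : u ≫ (y₂ ≫ ξ) = 0 := by
      rw [← Category.assoc, ← hκ₁, Category.assoc, hκξ, comp_zero]
    obtain ⟨τ, hτ⟩ := Triangle.yoneda_exact₂ _ hTW (y₂ ≫ ξ)
      (by dsimp only [Triangle.mk]; exact h6)
    dsimp only [Triangle.mk] at τ hτ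
    have h7 : l' ≫ (x₃ ≫ τ) = 0 := by
      rw [← Category.assoc, hx₂v, Category.assoc, ← hτ, ← Category.assoc, hx₂y₂, zero_comp]
    obtain ⟨σ, hσ⟩ := Triangle.yoneda_exact₃ _ hTL (x₃ ≫ τ)
      (by dsimp only [Triangle.mk]; exact h7)
    dsimp only [Triangle.mk] at σ hσ
    have hz₁σ : z₁ ≫ σ = 0 := hH₁.2 V hV _
    obtain ⟨χ', hχ'⟩ := Triangle.yoneda_exact₂ _ hT₁rot2 σ
      (by dsimp only [Triangle.mk]; exact hz₁σ)
    dsimp only [Triangle.mk] at χ' hχ'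
    have hσx : σ = (x₁⟦(1:ℤ)⟧') ≫ (-χ') := by
      rw [Preadditive.comp_neg, ← Preadditive.neg_comp, ← hχ']
    have hvτ' : v ≫ (τ - w ≫ (-χ')) = y₂ ≫ ξ := by
      rw [Preadditive.comp_sub, ← hτ, ← Category.assoc, hvw, zero_comp, sub_zero]
    have hx₃τ' : x₃ ≫ (τ - w ≫ (-χ')) = 0 := by
      calc x₃ ≫ (τ - w ≫ (-χ')) = x₃ ≫ τ - (x₃ ≫ w) ≫ (-χ') := by
            rw [Preadditive.comp_sub, Category.assoc]
        _ = δ ≫ σ - δ ≫ ((x₁⟦(1:ℤ)⟧') ≫ (-χ')) := by rw [hσ, ← hδ, Category.assoc]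
        _ = 0 := by rw [← hσx, sub_self]
    obtain ⟨ρ, hρ⟩ := Triangle.yoneda_exact₂ _ hT₃ (τ - w ≫ (-χ'))
      (by dsimp only [Triangle.mk]; exact hx₃τ')
    dsimp only [Triangle.mk] at ρ hρ
    have hy₂ξ : y₂ ≫ ξ = 0 := by
      rw [← hvτ', hρ, hH₃.2 V hV ρ, comp_zero, comp_zero]
    obtain ⟨ζ, hζ⟩ := Triangle.yoneda_exact₃ _ hT₂ ξ
      (by dsimp only [Triangle.mk]; exact hy₂ξ)
    dsimp only [Triangle.mk] at ζ hζ
    have h8 : z₁ ≫ ((l⟦(1:ℤ)⟧') ≫ ζ) = 0 := by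
      rw [← Category.assoc, hκ₂, Category.assoc, ← hζ, hκξ]
    obtain ⟨χ₂', hχ₂'⟩ := Triangle.yoneda_exact₂ _ hT₁rot2 ((l⟦(1:ℤ)⟧') ≫ ζ)
      (by dsimp only [Triangle.mk]; exact h8)
    dsimp only [Triangle.mk] at χ₂' hχ₂'
    have hχ₂e : (x₁⟦(1:ℤ)⟧') ≫ χ₂' = -((l⟦(1:ℤ)⟧') ≫ ζ) := by
      rw [hχ₂', Preadditive.neg_comp, neg_neg]
    have h9 : x₃ ≫ (w ≫ χ₂') = 0 := by
      calc x₃ ≫ (w ≫ χ₂') = (δ ≫ (x₁⟦(1:ℤ)⟧')) ≫ χ₂' := by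
            rw [hδ, Category.assoc]
        _ = δ ≫ (-((l⟦(1:ℤ)⟧') ≫ ζ)) := by rw [Category.assoc, hχ₂e]
        _ = -((δ ≫ (l⟦(1:ℤ)⟧')) ≫ ζ) := by rw [Preadditive.comp_neg, Category.assoc]
        _ = 0 := by rw [hδl, zero_comp, neg_zero]
    obtain ⟨ρ₂, hρ₂⟩ := Triangle.yoneda_exact₂ _ hT₃ (w ≫ χ₂')
      (by dsimp only [Triangle.mk]; exact h9)
    dsimp only [Triangle.mk] at ρ₂ hρ₂
    have hwχ₂ : w ≫ χ₂' = 0 := by rw [hρ₂, hH₃.2 V hV ρ₂, comp_zero]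
    obtain ⟨η', hη'⟩ := Triangle.yoneda_exact₂ _ hTWrot2 χ₂'
      (by dsimp only [Triangle.mk]; exact hwχ₂)
    dsimp only [Triangle.mk] at η' hη'
    have hld : (l⟦(1:ℤ)⟧') ≫ (ζ - (x₂⟦(1:ℤ)⟧') ≫ η') = 0 := by
      have e1 : (l⟦(1:ℤ)⟧') ≫ ζ = -((x₁⟦(1:ℤ)⟧') ≫ χ₂') := by rw [hχ₂e, neg_neg]
      have e2 : (x₁⟦(1:ℤ)⟧') ≫ χ₂' = -(((l ≫ x₂)⟦(1:ℤ)⟧') ≫ η') := by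
        simp only [hη', hx₁u, Functor.map_comp, Preadditive.neg_comp,
          Preadditive.comp_neg, Category.assoc]
      calc (l⟦(1:ℤ)⟧') ≫ (ζ - (x₂⟦(1:ℤ)⟧') ≫ η')
          = (l⟦(1:ℤ)⟧') ≫ ζ - ((l ≫ x₂)⟦(1:ℤ)⟧') ≫ η' := by
            simp only [Preadditive.comp_sub, Functor.map_comp, Category.assoc]
        _ = 0 := by rw [e1, e2, neg_neg, sub_self]
    obtain ⟨e₃, he₃⟩ := Triangle.yoneda_exact₂ _ hTLrot3 (ζ - (x₂⟦(1:ℤ)⟧') ≫ η')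
      (by dsimp only [Triangle.mk]; rw [Preadditive.neg_comp, hld, neg_zero]; rfl)
    dsimp only [Triangle.mk] at e₃ he₃
    have hz₃e₃ : z₃ ≫ e₃ = 0 := hH₃.2 V hV _
    calc ξ = z₂ ≫ ζ := hζ
      _ = z₂ ≫ ((ζ - (x₂⟦(1:ℤ)⟧') ≫ η') + (x₂⟦(1:ℤ)⟧') ≫ η') := by rw [sub_add_cancel]
      _ = z₂ ≫ ((-(l'⟦(1:ℤ)⟧')) ≫ e₃) + (z₂ ≫ (x₂⟦(1:ℤ)⟧')) ≫ η' := by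
          rw [Preadditive.comp_add, he₃]
          simp only [Category.assoc]
      _ = -((z₂ ≫ (l'⟦(1:ℤ)⟧')) ≫ e₃) := by
          rw [hz₂x₂, zero_comp, add_zero]
          simp only [Preadditive.neg_comp, Preadditive.comp_neg, Category.assoc]
      _ = -((lam ≫ z₃) ≫ e₃) := by rw [hlam₂]
      _ = 0 := by rw [Category.assoc, hz₃e₃, comp_zero, neg_zero]


lemma PhiC_iso {X X' : D} (e : X ≅ X') (h : PhiC P X) : PhiC P X' := by
  obtain ⟨W, i, r, hir, hW⟩ := h
  exact ⟨W, e.inv ≫ i, r ≫ e.hom, by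
    rw [Category.assoc, ← Category.assoc i, hir, Category.id_comp, Iso.inv_hom_id], hW⟩

lemma PhiC_shift {X : D} (h : PhiC P X) (n : ℤ) : PhiC P (X⟦n⟧) := by
  obtain ⟨W, i, r, hir, hW⟩ := h
  exact ⟨W⟦n⟧, (shiftFunctor D n).map i, (shiftFunctor D n).map r, by
    rw [← Functor.map_comp, hir, CategoryTheory.Functor.map_id], DecC_shift hW n⟩

lemma PhiC_smd {X Y : D} (i : X ⟶ Y) (r : Y ⟶ X) (hir : i ≫ r = 𝟙 X)
    (h : PhiC P Y) : PhiC P X := by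
  obtain ⟨W, i', r', hir', hW⟩ := h
  exact ⟨W, i ≫ i', r' ≫ r, by
    rw [Category.assoc, ← Category.assoc i', hir', Category.id_comp, hir], hW⟩

lemma PhiC_ext {X Y Z : D} {f : X ⟶ Y} {g : Y ⟶ Z} {h : Z ⟶ X⟦(1:ℤ)⟧}
    (hT : Triangle.mk f g h ∈ distTriang D)
    (hX : PhiC P X) (hZ : PhiC P Z) : PhiC P Y := by
  obtain ⟨W₁, i₁, r₁, hir₁, hW₁⟩ := hX
  obtain ⟨W₃, i₃, r₃, hir₃, hW₃⟩ := hZ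
  obtain ⟨W₂, u, v, w, i₂, r₂, hTW, hir₂⟩ := smd_ext hT i₁ r₁ hir₁ i₃ r₃ hir₃
  exact ⟨W₂, i₂, r₂, hir₂, DecC_ext hTW hW₁ hW₃⟩

lemma PhiC_P (hpre : ∀ j : ℤ, 0 < j → ∀ f : P ⟶ P⟦j⟧, f = 0) : PhiC P P :=
  ⟨P, 𝟙 P, 𝟙 P, Category.id_comp _, DecC_P hpre⟩

end WeightMachinery

/-- The technical core : orthogonality in `K^b(proj A)` coming from the silting hypothesis. -/
lemma core (m : ℕ) (hm : 0 < m) (P : D) (hP : P ∈ S.projC (-(m : ℤ)) 0)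
    (hsilt : S.Silting P) {R Z : D} (hRmem : R ∈ S.projC (-(m : ℤ)) 0)
    (hR : ∀ j : ℤ, j ≤ -1 → ∀ g : P⟦j⟧ ⟶ R, g = 0)
    (hZ : ∀ j : ℤ, 0 ≤ j → ∀ g : P⟦j⟧ ⟶ Z, g = 0)
    (v : R ⟶ Z) : v = 0 := by
  have hpre : ∀ j : ℤ, 0 < j → ∀ f : P ⟶ P⟦j⟧, f = 0 := fun j hj f => hsilt.1 j hj f
  have hthick : ExtModSetting.IsThickSub {X : D | PhiC P X} := by
    refine ⟨?_, ?_, ?_, ?_⟩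
    · intro X Y hX e
      exact PhiC_iso e hX
    · intro X n hX
      exact PhiC_shift hX n
    · intro X Y Z f g h hT hX hZ'
      exact PhiC_ext hT hX hZ'
    · intro X Y hY hXY
      obtain ⟨i, r, hir⟩ := hXY
      exact PhiC_smd i r hir hY
  have hPhiR : PhiC P R :=
    hsilt.2 {X : D | PhiC P X} hthick (PhiC_P hpre) ⟨-(m : ℤ), 0, hRmem⟩
  obtain ⟨W, i, r, hir, hW⟩ := hPhiR
  obtain ⟨L, H, f, g, h, hT, hL, hH⟩ := hW 0
  have hfr : f ≫ r = 0 := hL R (fun j hj p => hR j (by omega) p) _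
  obtain ⟨r', hr'⟩ := Triangle.yoneda_exact₂ _ hT r hfr
  dsimp only [Triangle.mk] at r' hr'
  have hHZ : ∀ φ : H ⟶ Z, φ = 0 := hH.2 Z (fun j hj p => hZ j hj p)
  calc v = (i ≫ r) ≫ v := by rw [hir, Category.id_comp]
    _ = (i ≫ g) ≫ (r' ≫ v) := by
        rw [hr']
        simp only [Category.assoc]
    _ = 0 := by rw [hHZ (r' ≫ v), comp_zero]

/-- Orthogonality between the torsion class and the torsion-free class. -/
lemma wall (m : ℕ) (hm : 0 < m) (P : D) (hP : P ∈ S.projC (-(m : ℤ)) 0)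
    (hsilt : S.Silting P) {Y Z : D} (hY : Y ∈ S.TP m P) (hZ : Z ∈ S.FP m P)
    (f : Y ⟶ Z) : f = 0 := by
  have hm' : (1 : ℤ) ≤ (m : ℤ) := by exact_mod_cast hm
  obtain ⟨W, φ, ψ, χ, hT, hWle, hWge⟩ := S.pm_triangle (m : ℤ) Y hm' hY.1.1 hY.1.2
  -- facts about R := S.pm m Y
  have hRmem : S.pm (m : ℤ) Y ∈ S.projC (-(m : ℤ)) 0 := S.pm_mem (m : ℤ) Y hm' hY.1.1 hY.1.2
  have hR : ∀ j : ℤ, j ≤ -1 → ∀ g : P⟦j⟧ ⟶ S.pm (m : ℤ) Y, g = 0 := by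
    intro j hj g
    have h1 : g ≫ ψ = 0 := by
      apply shift_transfer₁ (u := j) (v := -j) (by ring)
      intro g'
      exact hY.2 (-j) (by omega) g'
    obtain ⟨g', hg'⟩ := Triangle.coyoneda_exact₂ _ hT g h1
    have hPj : P⟦j⟧ ∈ S.projC (-(m : ℤ) - j) (0 - j) := S.projC_shift _ _ _ _ hP
    have hg'0 : g' = 0 := by
      refine S.projC_vanish _ _ _ _ hPj ?_ g'
      exact S.t.le_monotone (show -(m:ℤ) ≤ -(m:ℤ) - j - 1 by omega) W hWle
    rw [hg', hg'0]; exact zero_comp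
  -- the FP condition in shifted form
  have hZ' : ∀ j : ℤ, 0 ≤ j → ∀ g : P⟦j⟧ ⟶ Z, g = 0 := by
    intro j hj g
    apply shift_transfer₁ (u := j) (v := -j) (by ring)
    intro g'
    exact hZ.2 (-j) (by omega) g'
  -- the core vanishing
  have hcore : ψ ≫ f = 0 := core S m hm P hP hsilt hRmem hR hZ' _
  obtain ⟨w, hw⟩ := Triangle.yoneda_exact₃ _ hT f hcore
  have hw0 : w = 0 := by
    refine tzero S (show -(m:ℤ) - 1 < 1 - (m:ℤ) by omega) ?_ hZ.1.2 w
    exact le_shift S hWle 1 _ (by ring)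
  rw [hw, hw0]; exact comp_zero

end Auxiliary

/-!
Statement 11. Let `P` be an `(m+1)`-term silting complex in `K^b(proj A)`, and
for `X ∈ m-mod A` let `t(X) → X → f(X) → t(X)[1]` be the canonical triangle
with respect to the s-torsion pair `(T(P), F(P))`.  Then `t(νA[m-1])` is an
injective object of `T(P)` and `f(A)` is a projective object of `F(P)`.
-/
theorem stmt11 (S : ExtModSetting k D) (m : ℕ) (hm : 0 < m)
    (P : D) (hP : P ∈ S.projC (-(m : ℤ)) 0) (hsilt : S.Silting P)
    -- the canonical triangle  t(νA[m-1]) → νA[m-1] → f(νA[m-1]) → ⬝⟦1⟧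
    (TX FX : D) (a : TX ⟶ (S.nakF S.AA)⟦(m : ℤ) - 1⟧)
    (b : (S.nakF S.AA)⟦(m : ℤ) - 1⟧ ⟶ FX) (c : FX ⟶ TX⟦(1 : ℤ)⟧)
    (hTri1 : Triangle.mk a b c ∈ distTriang D)
    (hTX : TX ∈ S.TP m P) (hFX : FX ∈ S.FP m P)
    -- the canonical triangle  t(A) → A → f(A) → ⬝⟦1⟧
    (TA FA : D) (a' : TA ⟶ S.AA) (b' : S.AA ⟶ FA) (c' : FA ⟶ TA⟦(1 : ℤ)⟧)
    (hTri2 : Triangle.mk a' b' c' ∈ distTriang D)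
    (hTA : TA ∈ S.TP m P) (hFA : FA ∈ S.FP m P) :
    InjIn (S.TP m P) TX ∧ ProjIn (S.FP m P) FA := by
  constructor
  · -- t(νA[m-1]) is injective in T(P)
    refine ⟨hTX, ?_⟩
    intro Y hY f
    -- rotate the triangle hTri1
    have hrot := rot_of_distTriang _ hTri1
    -- f ≫ (rotated mor₃) = 0 because Hom(Y, (νA)[m-1][1]) = 0
    have hobs : f ≫ (Triangle.mk a b c).rotate.mor₃ = 0 := by
      show f ≫ (-((shiftFunctor D (1:ℤ)).map a)) = 0
      rw [Preadditive.comp_neg, neg_eq_zero]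
      -- the target of f ≫ a⟦1⟧ lies in injC (-m) (-m)
      have hI : S.nakF S.AA ∈ S.injC 0 0 := S.nakF_mem 0 0 S.AA S.AA_mem
      have hI1 := S.injC_shift 0 0 ((m:ℤ)-1) _ hI
      have hI2 := S.injC_shift _ _ (1:ℤ) _ hI1
      refine S.injC_vanish _ _ _ _ hI2 ?_ _
      have he : (0 - ((m:ℤ)-1) - 1) + 1 = 1 - (m:ℤ) := by ring
      rw [he]
      exact hY.1.2
    obtain ⟨g, hg⟩ := Triangle.coyoneda_exact₃ _ hrot f hobs
    have hgz : g = 0 := wall S m hm P hP hsilt hY hFX g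
    rw [hg, hgz]; exact zero_comp
  · -- f(A) is projective in F(P)
    refine ⟨hFA, ?_⟩
    intro Z hZ f
    have hrot := rot_of_distTriang _ hTri2
    -- b' ≫ f = 0 because Hom(A, Z[1]) = 0
    have hobs : (Triangle.mk a' b' c').rotate.mor₁ ≫ f = 0 := by
      show b' ≫ f = 0
      refine S.projC_vanish 0 0 _ _ S.AA_mem ?_ _
      exact le_shift S hZ.1.1 1 (0-1) (by ring)
    obtain ⟨g, hg⟩ := Triangle.yoneda_exact₂ _ hrot f hobs
    obtain ⟨g', rfl⟩ := (shiftFunctor D (1:ℤ)).map_surjective g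
    have hg'z : g' = 0 := wall S m hm P hP hsilt hTA hZ g'
    rw [hg, hg'z, Functor.map_zero]; exact comp_zero
end
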